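/- arXiv:2102.00829 — 8 statements merged into one kernel-verified Lean document; each statement's English description precedes it below -/
import Mathlib

section
/- Let G be a finite group and A a commutative unital ring. Then there is an isomorphism of A-modules Der(A[G]) ≅ Inn(A[G]) ⊕ (⨁_{[u]} Hom_Ab(Z(u), A)), where the direct sum ranges over all conjugacy classes of G with one representative u chosen in each class, and Z(u) is the centralizer of u in G. -/
open MonoidAlgebra

/-- The A-module of derivations of the group ring A[G]. -/
def derSub (A G : Type) [CommRing A] [Group G] :
    Submodule A (MonoidAlgebra A G →ₗ[A] MonoidAlgebra A G) where
  carrier := {d | ∀ x y, d (x * y) = d x * y + x * d y}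
  add_mem' := by
    intro d e hd he x y
    simp only [LinearMap.add_apply, hd x y, he x y, add_mul, mul_add]
    abel
  zero_mem' := by intro x y; simp
  smul_mem' := by
    intro c d hd x y
    simp only [LinearMap.smul_apply, hd x y, smul_add, smul_mul_assoc, mul_smul_comm]

/-- The A-submodule of inner derivations, inside the derivations. -/
def innSub (A G : Type) [CommRing A] [Group G] : Submodule A (derSub A G) where
  carrier := {d | ∃ a : MonoidAlgebra A G,
    ∀ x, (d : MonoidAlgebra A G →ₗ[A] MonoidAlgebra A G) x = a * x - x * a}
  add_mem' := by
    rintro d e ⟨a, ha⟩ ⟨b, hb⟩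
    refine ⟨a + b, fun x => ?_⟩
    simp only [Submodule.coe_add, LinearMap.add_apply, ha x, hb x, add_mul, mul_add]
    abel
  zero_mem' := ⟨0, fun x => by simp⟩
  smul_mem' := by
    rintro c d ⟨a, ha⟩
    refine ⟨c • a, fun x => ?_⟩
    simp only [Submodule.coe_smul, LinearMap.smul_apply, ha x, smul_sub, smul_mul_assoc,
      mul_smul_comm]

namespace DerDecompAux

section Basic

variable {A G : Type} [CommRing A] [Group G]

lemma ma_add_apply (f g : MonoidAlgebra A G) (x : G) : (f + g).coeff x = f.coeff x + g.coeff x := rfl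
lemma ma_sub_apply (f g : MonoidAlgebra A G) (x : G) : (f - g).coeff x = f.coeff x - g.coeff x := rfl
lemma ma_smul_apply (a : A) (f : MonoidAlgebra A G) (x : G) : (a • f).coeff x = a * f.coeff x := rfl

/-- The "cocycle coefficient" of a linear map `d` on the group algebra:
the coefficient of `x * g` in `d (single g 1)`. -/
noncomputable def co (d : MonoidAlgebra A G →ₗ[A] MonoidAlgebra A G) (g x : G) : A :=
  (d (single g 1)).coeff (x * g)

lemma co_mul {d : MonoidAlgebra A G →ₗ[A] MonoidAlgebra A G} (hd : d ∈ derSub A G)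
    (g h x : G) : co d (g * h) x = co d g x + co d h (g⁻¹ * x * g) := by
  have e : (single (g * h) (1 : A) : MonoidAlgebra A G) = single g 1 * single h 1 := by
    rw [single_mul_single, one_mul]
  have e2 : x * (g * h) * h⁻¹ = x * g := by group
  have e3 : g⁻¹ * (x * (g * h)) = g⁻¹ * x * g * h := by group
  have hd' : ∀ u v : MonoidAlgebra A G, d (u * v) = d u * v + u * d v := hd
  simp only [co, e, hd' (single g 1) (single h 1), ma_add_apply, mul_single_apply,
    single_mul_apply, mul_one, one_mul, e2, e3]

lemma co_one {d : MonoidAlgebra A G →ₗ[A] MonoidAlgebra A G} (hd : d ∈ derSub A G)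
    (x : G) : co d 1 x = 0 := by
  have h1 := co_mul hd 1 1 x
  simp only [one_mul, mul_one, inv_one] at h1
  exact left_eq_add.mp h1

lemma co_inv {d : MonoidAlgebra A G →ₗ[A] MonoidAlgebra A G} (hd : d ∈ derSub A G)
    (g x : G) : co d g⁻¹ (g⁻¹ * x * g) = - co d g x := by
  have h1 := co_mul hd g g⁻¹ x
  rw [mul_inv_cancel, co_one hd] at h1
  exact eq_neg_of_add_eq_zero_right h1.symm

end Basic

section Tau

variable {G : Type} [Group G]
variable (rep : ConjClasses G → G) (hrep : ∀ c, ConjClasses.mk (rep c) = c)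

open Classical in
/-- A choice of conjugating element: `tau x * rep ⟦x⟧ = x * tau x`, with `tau (rep c) = 1`. -/
noncomputable def tau (x : G) : G :=
  if x = rep (ConjClasses.mk x) then 1
  else Classical.choose (isConj_iff.mp (ConjClasses.mk_eq_mk_iff_isConj.mp
    (hrep (ConjClasses.mk x))))

lemma tau_spec (x : G) : tau rep hrep x * rep (ConjClasses.mk x) = x * tau rep hrep x := by
  unfold tau
  split_ifs with h
  · rw [one_mul, mul_one]; exact h.symm
  · have hs := Classical.choose_spec (isConj_iff.mp (ConjClasses.mk_eq_mk_iff_isConj.mp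
      (hrep (ConjClasses.mk x))))
    rw [mul_inv_eq_iff_eq_mul] at hs
    exact hs

lemma tau_rep (c : ConjClasses G) : tau rep hrep (rep c) = 1 := by
  unfold tau
  rw [if_pos]
  rw [hrep]

lemma mk_conj (g x : G) : ConjClasses.mk (g⁻¹ * x * g) = ConjClasses.mk x := by
  rw [ConjClasses.mk_eq_mk_iff_isConj]
  exact isConj_iff.mpr ⟨g, by group⟩

/-- The element of the centralizer associated to `g` and `x`. -/
noncomputable def iota (g x : G) : G :=
  (tau rep hrep x)⁻¹ * g * tau rep hrep (g⁻¹ * x * g)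

lemma iota_mem (g x : G) :
    iota rep hrep g x ∈ Subgroup.centralizer {rep (ConjClasses.mk x)} := by
  rw [Subgroup.mem_centralizer_singleton_iff]
  have h1 := tau_spec rep hrep (g⁻¹ * x * g)
  rw [mk_conj] at h1
  have h2 := tau_spec rep hrep x
  set t := tau rep hrep x
  set s := tau rep hrep (g⁻¹ * x * g)
  set u := rep (ConjClasses.mk x)
  have h2' : u = t⁻¹ * (x * t) := by rw [← h2]; group
  have hio : iota rep hrep g x = t⁻¹ * g * s := rfl
  calc iota rep hrep g x * u = t⁻¹ * g * (s * u) := by rw [hio]; group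
    _ = t⁻¹ * g * ((g⁻¹ * x * g) * s) := by rw [h1]
    _ = t⁻¹ * (x * t) * (t⁻¹ * g * s) := by group
    _ = u * iota rep hrep g x := by rw [hio, ← h2']

end Tau

section Sval

variable {A G : Type} [CommRing A] [Group G]
variable (rep : ConjClasses G → G) (hrep : ∀ c, ConjClasses.mk (rep c) = c)

lemma phi_cast (φ : ∀ c : ConjClasses G,
      Additive (Subgroup.centralizer {rep c} : Subgroup G) →+ A)
    {c₁ c₂ : ConjClasses G} (e : c₁ = c₂) (g : G)
    (p : g ∈ Subgroup.centralizer {rep c₁}) (q : g ∈ Subgroup.centralizer {rep c₂}) :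
    φ c₁ (Additive.ofMul ⟨g, p⟩) = φ c₂ (Additive.ofMul ⟨g, q⟩) := by
  subst e; rfl

/-- The scalar value used to build the section of the evaluation map. -/
noncomputable def sval (φ : ∀ c : ConjClasses G,
      Additive (Subgroup.centralizer {rep c} : Subgroup G) →+ A) (g x : G) : A :=
  φ (ConjClasses.mk x) (Additive.ofMul ⟨iota rep hrep g x, iota_mem rep hrep g x⟩)

lemma sval_cocycle (φ : ∀ c : ConjClasses G,
      Additive (Subgroup.centralizer {rep c} : Subgroup G) →+ A) (g h x : G) :
    sval rep hrep φ (g * h) x = sval rep hrep φ g x + sval rep hrep φ h (g⁻¹ * x * g) := by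
  set y := g⁻¹ * x * g with hy
  have e1 : iota rep hrep (g * h) x = iota rep hrep g x * iota rep hrep h y := by
    unfold iota
    have e : (g * h)⁻¹ * x * (g * h) = h⁻¹ * y * h := by rw [hy]; group
    rw [e, ← hy]; group
  have mem2 : iota rep hrep h y ∈ Subgroup.centralizer {rep (ConjClasses.mk x)} := by
    have := iota_mem rep hrep h y
    rwa [hy, mk_conj] at this
  have e2 : (⟨iota rep hrep (g * h) x, iota_mem rep hrep (g * h) x⟩ :
      Subgroup.centralizer {rep (ConjClasses.mk x)}) =
      ⟨iota rep hrep g x, iota_mem rep hrep g x⟩ * ⟨iota rep hrep h y, mem2⟩ :=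
    Subtype.ext e1
  have e3 : sval rep hrep φ h y =
      φ (ConjClasses.mk x) (Additive.ofMul ⟨iota rep hrep h y, mem2⟩) := by
    unfold sval
    exact phi_cast rep φ (by rw [hy, mk_conj]) _ _ _
  unfold sval
  rw [e2, ofMul_mul, map_add, ← e3]
  rfl

end Sval

section Finite

set_option linter.unusedSectionVars false

variable {A G : Type} [CommRing A] [Group G] [Finite G]
variable (rep : ConjClasses G → G) (hrep : ∀ c, ConjClasses.mk (rep c) = c)

/-- The image of the basis vector `g` under the section derivation built from `φ`. -/
noncomputable def T (φ : ∀ c : ConjClasses G,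
      Additive (Subgroup.centralizer {rep c} : Subgroup G) →+ A) (g : G) :
    MonoidAlgebra A G :=
  MonoidAlgebra.ofCoeff (Finsupp.equivFunOnFinite.symm (fun w => sval rep hrep φ g (w * g⁻¹)))

lemma T_apply (φ : ∀ c : ConjClasses G,
      Additive (Subgroup.centralizer {rep c} : Subgroup G) →+ A) (g w : G) :
    (T rep hrep φ g).coeff w = sval rep hrep φ g (w * g⁻¹) := rfl

/-- The section derivation built from a family `φ` of additive homomorphisms. -/
noncomputable def S (φ : ∀ c : ConjClasses G,
      Additive (Subgroup.centralizer {rep c} : Subgroup G) →+ A) :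
    MonoidAlgebra A G →ₗ[A] MonoidAlgebra A G :=
  (Finsupp.lsum A fun g => LinearMap.toSpanSingleton A (MonoidAlgebra A G) (T rep hrep φ g)) ∘ₗ
    (MonoidAlgebra.coeffLinearEquiv A).toLinearMap

lemma S_single (φ : ∀ c : ConjClasses G,
      Additive (Subgroup.centralizer {rep c} : Subgroup G) →+ A) (g : G) (a : A) :
    S rep hrep φ (single g a) = a • T rep hrep φ g :=
  Finsupp.lsum_single A _ _ _

lemma S_apply (φ : ∀ c : ConjClasses G,
      Additive (Subgroup.centralizer {rep c} : Subgroup G) →+ A) (g : G) (a : A) (w : G) :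
    (S rep hrep φ (single g a)).coeff w = a * sval rep hrep φ g (w * g⁻¹) := by
  rw [S_single, ma_smul_apply, T_apply]

lemma S_leibniz (φ : ∀ c : ConjClasses G,
      Additive (Subgroup.centralizer {rep c} : Subgroup G) →+ A) :
    S rep hrep φ ∈ derSub A G := by
  have key : ∀ (g h : G) (a b : A),
      S rep hrep φ (single g a * single h b) =
        S rep hrep φ (single g a) * single h b + single g a * S rep hrep φ (single h b) := by
    intro g h a b
    rw [single_mul_single]
    apply MonoidAlgebra.ext
    apply Finsupp.ext
    intro w
    have e1 : w * (g * h)⁻¹ = w * h⁻¹ * g⁻¹ := by group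
    have e2 : g⁻¹ * w * h⁻¹ = g⁻¹ * (w * h⁻¹ * g⁻¹) * g := by group
    rw [ma_add_apply, S_apply, mul_single_apply, single_mul_apply, S_apply, S_apply, e1, e2,
      sval_cocycle]
    ring
  intro z w
  induction z using MonoidAlgebra.induction_linear with
  | zero => simp
  | add f f' hf hf' =>
    simp only [add_mul, map_add, hf, hf']
    abel
  | single g a =>
    induction w using MonoidAlgebra.induction_linear with
    | zero => simp
    | add f f' hf hf' =>
      simp only [mul_add, map_add, hf, hf']
      abel
    | single h b => exact key g h a b

/-- The evaluation of a derivation at conjugacy class representatives. -/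
noncomputable def Phi (d : derSub A G) (c : ConjClasses G) :
    Additive (Subgroup.centralizer {rep c} : Subgroup G) →+ A where
  toFun h := co (d : MonoidAlgebra A G →ₗ[A] MonoidAlgebra A G)
    ((Additive.toMul h : Subgroup.centralizer {rep c}) : G) (rep c)
  map_zero' := co_one d.2 _
  map_add' h₁ h₂ := by
    set g₁ : G := ((Additive.toMul h₁ : Subgroup.centralizer {rep c}) : G)
    set g₂ : G := ((Additive.toMul h₂ : Subgroup.centralizer {rep c}) : G)
    have hc : g₁ * rep c = rep c * g₁ :=
      Subgroup.mem_centralizer_singleton_iff.mp (Additive.toMul h₁).2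
    have e : g₁⁻¹ * rep c * g₁ = rep c := by
      rw [mul_assoc, ← hc, ← mul_assoc, inv_mul_cancel, one_mul]
    have h := co_mul d.2 g₁ g₂ (rep c)
    rw [e] at h
    exact h

lemma sval_Phi (d : derSub A G) (g x : G) :
    sval rep hrep (Phi rep d) g x =
      co (d : MonoidAlgebra A G →ₗ[A] MonoidAlgebra A G) (iota rep hrep g x)
        (rep (ConjClasses.mk x)) := rfl

lemma main_co (d : derSub A G) (g x : G) :
    co (d : MonoidAlgebra A G →ₗ[A] MonoidAlgebra A G) g x =
      co (d : MonoidAlgebra A G →ₗ[A] MonoidAlgebra A G) (tau rep hrep x) x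
      - co (d : MonoidAlgebra A G →ₗ[A] MonoidAlgebra A G)
          (tau rep hrep (g⁻¹ * x * g)) (g⁻¹ * x * g)
      + sval rep hrep (Phi rep d) g x := by
  set t := tau rep hrep x with ht
  set y := g⁻¹ * x * g with hy
  set s := tau rep hrep y with hs
  set u := rep (ConjClasses.mk x) with hu
  have hspec : t * u = x * t := tau_spec rep hrep x
  have hx1 : t⁻¹⁻¹ * u * t⁻¹ = x := by rw [inv_inv, hspec]; group
  have hx2 : t⁻¹ * x * t = u := by
    have : t⁻¹ * (t * u) = u := by group
    rw [hspec] at this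
    rw [← this]; group
  have h1 := co_mul d.2 t⁻¹ (g * s) u
  rw [hx1] at h1
  have h2 := co_mul d.2 g s x
  rw [← hy] at h2
  have h3 := co_inv d.2 t x
  rw [hx2] at h3
  rw [h2, h3] at h1
  have hio : iota rep hrep g x = t⁻¹ * (g * s) := by
    rw [show iota rep hrep g x = t⁻¹ * g * s from rfl, mul_assoc]
  rw [sval_Phi, hio, h1]
  ring

/-- The witness for innerness of `d - S (Phi d)`. -/
noncomputable def bwit (d : derSub A G) : MonoidAlgebra A G :=
  MonoidAlgebra.ofCoeff (Finsupp.equivFunOnFinite.symm fun x =>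
    co (d : MonoidAlgebra A G →ₗ[A] MonoidAlgebra A G) (tau rep hrep x) x)

lemma bwit_apply (d : derSub A G) (x : G) :
    (bwit rep hrep d).coeff x = co (d : MonoidAlgebra A G →ₗ[A] MonoidAlgebra A G) (tau rep hrep x) x :=
  rfl

lemma decomp (d : derSub A G) (z : MonoidAlgebra A G) :
    (d : MonoidAlgebra A G →ₗ[A] MonoidAlgebra A G) z - S rep hrep (Phi rep d) z
      = bwit rep hrep d * z - z * bwit rep hrep d := by
  induction z using MonoidAlgebra.induction_linear with
  | zero => simp
  | add f f' hf hf' =>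
    rw [sub_eq_iff_eq_add] at hf hf' ⊢
    simp only [map_add, add_mul, mul_add, hf, hf']
    abel
  | single g b =>
    apply MonoidAlgebra.ext
    apply Finsupp.ext
    intro w
    have e0 : w * g⁻¹ * g = w := by group
    have e1 : g⁻¹ * (w * g⁻¹) * g = g⁻¹ * w := by group
    have hmc := main_co rep hrep d g (w * g⁻¹)
    rw [e1] at hmc
    have hdb : (d : MonoidAlgebra A G →ₗ[A] MonoidAlgebra A G) (single g b)
        = b • (d : MonoidAlgebra A G →ₗ[A] MonoidAlgebra A G) (single g 1) := by
      rw [← map_smul, smul_single', mul_one]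
    have hco : co (d : MonoidAlgebra A G →ₗ[A] MonoidAlgebra A G) g (w * g⁻¹)
        = ((d : MonoidAlgebra A G →ₗ[A] MonoidAlgebra A G) (single g 1)).coeff w := by
      simp only [co]
      rw [e0]
    rw [ma_sub_apply, ma_sub_apply, mul_single_apply, single_mul_apply, S_apply,
      bwit_apply, bwit_apply, hdb, ma_smul_apply]
    rw [← hco, hmc]
    ring

lemma Phi_S (φ : ∀ c : ConjClasses G,
      Additive (Subgroup.centralizer {rep c} : Subgroup G) →+ A) (c : ConjClasses G) :
    Phi rep (⟨S rep hrep φ, S_leibniz rep hrep φ⟩ : derSub A G) c = φ c := by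
  ext h
  set g : G := ((Additive.toMul h : Subgroup.centralizer {rep c}) : G) with hg
  have hgmem : g ∈ Subgroup.centralizer {rep c} := (Additive.toMul h).2
  have hc : g * rep c = rep c * g := Subgroup.mem_centralizer_singleton_iff.mp hgmem
  have e0 : rep c * g * g⁻¹ = rep c := by group
  show co (S rep hrep φ) g (rep c) = φ c h
  rw [co, S_apply, e0, one_mul]
  have eg : g⁻¹ * rep c * g = rep c := by
    rw [mul_assoc, ← hc, ← mul_assoc, inv_mul_cancel, one_mul]
  have eiota : iota rep hrep g (rep c) = g := by
    rw [show iota rep hrep g (rep c)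
        = (tau rep hrep (rep c))⁻¹ * g * tau rep hrep (g⁻¹ * rep c * g) from rfl,
      eg, tau_rep, inv_one, one_mul, mul_one]
  have hmem' : g ∈ Subgroup.centralizer {rep (ConjClasses.mk (rep c))} := by
    rw [hrep]; exact hgmem
  have e2 : (⟨iota rep hrep g (rep c), iota_mem rep hrep g (rep c)⟩ :
      Subgroup.centralizer {rep (ConjClasses.mk (rep c))}) = ⟨g, hmem'⟩ := Subtype.ext eiota
  show φ (ConjClasses.mk (rep c))
      (Additive.ofMul ⟨iota rep hrep g (rep c), iota_mem rep hrep g (rep c)⟩) = φ c h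
  rw [e2, phi_cast rep φ (hrep c) g hmem' hgmem]
  congr 1

lemma Phi_inner (i : derSub A G) (hi : i ∈ innSub A G) (c : ConjClasses G) :
    Phi rep i c = 0 := by
  obtain ⟨a, ha⟩ := hi
  ext h
  set g : G := ((Additive.toMul h : Subgroup.centralizer {rep c}) : G) with hg
  have hgmem : g ∈ Subgroup.centralizer {rep c} := (Additive.toMul h).2
  have hc : g * rep c = rep c * g := Subgroup.mem_centralizer_singleton_iff.mp hgmem
  show co (i : MonoidAlgebra A G →ₗ[A] MonoidAlgebra A G) g (rep c) = (0 : Additive (Subgroup.centralizer {rep c} : Subgroup G) →+ A) h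
  rw [co, ha, ma_sub_apply, mul_single_apply, single_mul_apply, mul_one, one_mul]
  have e0 : rep c * g * g⁻¹ = rep c := by group
  have e1 : g⁻¹ * (rep c * g) = rep c := by rw [← hc]; group
  rw [e0, e1, sub_self]
  rfl

lemma Phi_add (d e : derSub A G) (c : ConjClasses G) :
    Phi rep (d + e) c = Phi rep d c + Phi rep e c := by
  ext h
  show co ((d + e : derSub A G) : MonoidAlgebra A G →ₗ[A] MonoidAlgebra A G) _ _ = _
  rw [Submodule.coe_add]
  simp only [co, LinearMap.add_apply, ma_add_apply]
  rfl

lemma Phi_smul (a : A) (d : derSub A G) (c : ConjClasses G) :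
    Phi rep (a • d) c = a • Phi rep d c := by
  ext h
  show co ((a • d : derSub A G) : MonoidAlgebra A G →ₗ[A] MonoidAlgebra A G) _ _ = _
  rw [Submodule.coe_smul]
  simp only [co, LinearMap.smul_apply, ma_smul_apply, AddMonoidHom.smul_apply, smul_eq_mul]
  rfl

lemma S_add (φ ψ : ∀ c : ConjClasses G,
      Additive (Subgroup.centralizer {rep c} : Subgroup G) →+ A) :
    S rep hrep (φ + ψ) = S rep hrep φ + S rep hrep ψ := by
  refine MonoidAlgebra.lhom_ext' fun g => LinearMap.ext fun a => MonoidAlgebra.ext (Finsupp.ext fun w => ?_)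
  simp only [LinearMap.coe_comp, Function.comp_apply, lsingle_apply, LinearMap.add_apply,
    ma_add_apply, S_apply, sval, Pi.add_apply, AddMonoidHom.add_apply]
  ring

lemma S_smul (r : A) (φ : ∀ c : ConjClasses G,
      Additive (Subgroup.centralizer {rep c} : Subgroup G) →+ A) :
    S rep hrep (r • φ) = r • S rep hrep φ := by
  refine MonoidAlgebra.lhom_ext' fun g => LinearMap.ext fun a => MonoidAlgebra.ext (Finsupp.ext fun w => ?_)
  simp only [LinearMap.coe_comp, Function.comp_apply, lsingle_apply, LinearMap.smul_apply,
    ma_smul_apply, S_apply, sval, Pi.smul_apply, AddMonoidHom.smul_apply, smul_eq_mul]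
  ring

end Finite

end DerDecompAux

open DerDecompAux in
set_option maxHeartbeats 2000000 in
/-- **Decomposition of derivations of a finite group ring.**
If `G` is a finite group and `A` is a commutative unital ring, then
`Der(A[G]) ≅ Inn(A[G]) ⊕ ⨁_{[u]} Hom_Ab(Z(u), A)` as `A`-modules,
the sum ranging over the conjugacy classes of `G` with chosen representatives. -/
theorem der_decomposition_of_finite_group
    (A G : Type) [CommRing A] [Group G] [Finite G]
    (rep : ConjClasses G → G) (hrep : ∀ c, ConjClasses.mk (rep c) = c) :
    Nonempty ((derSub A G) ≃ₗ[A]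
      (innSub A G) ×
        (DirectSum (ConjClasses G)
          fun c => (Additive (Subgroup.centralizer {rep c} : Subgroup G) →+ A))) := by
  haveI : Finite (ConjClasses G) := Quotient.finite _
  haveI : Fintype (ConjClasses G) := Fintype.ofFinite _
  obtain ⟨E⟩ : Nonempty ((DirectSum (ConjClasses G)
      fun c => (Additive (Subgroup.centralizer {rep c} : Subgroup G) →+ A)) ≃ₗ[A]
      ∀ c : ConjClasses G, Additive (Subgroup.centralizer {rep c} : Subgroup G) →+ A) :=
    ⟨DirectSum.linearEquivFunOnFintype A (ConjClasses G)
      (fun c => Additive (Subgroup.centralizer {rep c} : Subgroup G) →+ A)⟩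
  -- the derivation part of the forward map
  have hmemder : ∀ d : derSub A G,
      (d : MonoidAlgebra A G →ₗ[A] MonoidAlgebra A G) - S rep hrep (Phi rep d) ∈ derSub A G :=
    fun d => sub_mem d.2 (S_leibniz rep hrep (Phi rep d))
  have hmeminn : ∀ d : derSub A G,
      (⟨(d : MonoidAlgebra A G →ₗ[A] MonoidAlgebra A G) - S rep hrep (Phi rep d),
        hmemder d⟩ : derSub A G) ∈ innSub A G := by
    intro d
    refine ⟨bwit rep hrep d, fun z => ?_⟩
    show ((d : MonoidAlgebra A G →ₗ[A] MonoidAlgebra A G) - S rep hrep (Phi rep d)) z = _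
    rw [LinearMap.sub_apply]
    exact decomp rep hrep d z
  refine ⟨{
    toFun := fun d =>
      (⟨⟨(d : MonoidAlgebra A G →ₗ[A] MonoidAlgebra A G) - S rep hrep (Phi rep d),
          hmemder d⟩, hmeminn d⟩,
        E.symm (Phi rep d))
    invFun := fun p =>
      ((p.1 : derSub A G) + ⟨S rep hrep (E p.2), S_leibniz rep hrep (E p.2)⟩ : derSub A G)
    map_add' := by
      intro d e
      have hφ : Phi rep (d + e) = Phi rep d + Phi rep e := funext fun c => Phi_add rep d e c
      refine Prod.ext ?_ ?_
      · apply Subtype.ext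
        apply Subtype.ext
        show ((d + e : derSub A G) : MonoidAlgebra A G →ₗ[A] MonoidAlgebra A G)
            - S rep hrep (Phi rep (d + e)) = _
        rw [hφ, S_add, Submodule.coe_add]
        show _ = ((d : MonoidAlgebra A G →ₗ[A] MonoidAlgebra A G) - S rep hrep (Phi rep d))
          + ((e : MonoidAlgebra A G →ₗ[A] MonoidAlgebra A G) - S rep hrep (Phi rep e))
        abel
      · show E.symm (Phi rep (d + e)) = E.symm (Phi rep d) + E.symm (Phi rep e)
        rw [hφ, map_add]
    map_smul' := by
      intro a d
      have hφ : Phi rep (a • d) = a • Phi rep d := funext fun c => Phi_smul rep a d c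
      refine Prod.ext ?_ ?_
      · apply Subtype.ext
        apply Subtype.ext
        show ((a • d : derSub A G) : MonoidAlgebra A G →ₗ[A] MonoidAlgebra A G)
            - S rep hrep (Phi rep (a • d)) = _
        rw [hφ, S_smul, Submodule.coe_smul]
        show _ = a • ((d : MonoidAlgebra A G →ₗ[A] MonoidAlgebra A G)
          - S rep hrep (Phi rep d))
        rw [smul_sub]
      · show E.symm (Phi rep (a • d)) = a • E.symm (Phi rep d)
        rw [hφ, map_smul]
    left_inv := by
      intro d
      apply Subtype.ext
      show ((d : MonoidAlgebra A G →ₗ[A] MonoidAlgebra A G) - S rep hrep (Phi rep d))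
          + S rep hrep (E (E.symm (Phi rep d))) = (d : MonoidAlgebra A G →ₗ[A] MonoidAlgebra A G)
      rw [E.apply_symm_apply, sub_add_cancel]
    right_inv := by
      rintro ⟨i, σ⟩
      set dd : derSub A G :=
        (i : derSub A G) + ⟨S rep hrep (E σ), S_leibniz rep hrep (E σ)⟩ with hdd
      have hφ : Phi rep dd = E σ := by
        funext c
        rw [hdd, Phi_add rep _ _ c, Phi_inner rep (i : derSub A G) i.2 c,
          Phi_S rep hrep (E σ) c, zero_add]
      refine Prod.ext ?_ ?_
      · apply Subtype.ext
        apply Subtype.ext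
        show (dd : MonoidAlgebra A G →ₗ[A] MonoidAlgebra A G) - S rep hrep (Phi rep dd)
            = ((i : derSub A G) : MonoidAlgebra A G →ₗ[A] MonoidAlgebra A G)
        rw [hφ]
        show ((i : derSub A G) : MonoidAlgebra A G →ₗ[A] MonoidAlgebra A G)
            + S rep hrep (E σ) - S rep hrep (E σ) = _
        rw [add_sub_cancel_right]
      · show E.symm (Phi rep dd) = σ
        rw [hφ, E.symm_apply_apply]
  }⟩
end

section
/- Let G be a finite group and A a commutative unital ring. Then the quotient A-module Out(A[G]) = Der(A[G])/Inn(A[G]) of outer derivations is isomorphic, as an A-module, to ⨁_{[u]} Hom_Ab(Z(u), A), where the direct sum ranges over all conjugacy classes of G with one representative u chosen in each class, and Z(u) is the centralizer of u in G. -/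
set_option maxSynthPendingDepth 3

open MonoidAlgebra

namespace OutProofAux

variable {A G : Type} [CommRing A] [Group G]

noncomputable def tconj (rep : ConjClasses G → G) (x : G) : G :=
  letI := Classical.propDecidable;
  if h : IsConj (rep (ConjClasses.mk x)) x ∧ x ≠ rep (ConjClasses.mk x) then
    Classical.choose (isConj_iff.mp h.1)
  else 1

lemma tconj_spec (rep : ConjClasses G → G) (hrep : ∀ c, ConjClasses.mk (rep c) = c) (x : G) :
    tconj rep x * rep (ConjClasses.mk x) * (tconj rep x)⁻¹ = x := by
  unfold tconj
  classical
  by_cases hx : x = rep (ConjClasses.mk x)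
  · rw [dif_neg (fun h => h.2 hx)]
    rw [inv_one, mul_one, one_mul, ← hx]
  · have hc : IsConj (rep (ConjClasses.mk x)) x :=
      ConjClasses.mk_eq_mk_iff_isConj.mp (hrep (ConjClasses.mk x))
    rw [dif_pos ⟨hc, hx⟩]
    exact Classical.choose_spec (isConj_iff.mp hc)

lemma tconj_rep (rep : ConjClasses G → G) (hrep : ∀ c, ConjClasses.mk (rep c) = c)
    (c : ConjClasses G) : tconj rep (rep c) = 1 := by
  unfold tconj
  classical
  rw [dif_neg]
  intro h
  exact h.2 (by rw [hrep c])

lemma conj_mk (g x : G) : ConjClasses.mk (g⁻¹ * x * g) = ConjClasses.mk x :=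
  ConjClasses.mk_eq_mk_iff_isConj.mpr (isConj_iff.mpr ⟨g, by group⟩)

lemma tconj_spec' (rep : ConjClasses G → G) (hrep : ∀ c, ConjClasses.mk (rep c) = c)
    (g x : G) :
    tconj rep (g⁻¹ * x * g) * rep (ConjClasses.mk x) * (tconj rep (g⁻¹ * x * g))⁻¹
      = g⁻¹ * x * g := by
  have := tconj_spec rep hrep (g⁻¹ * x * g)
  rwa [conj_mk] at this

/-- The conjugator `tconj rep x ⁻¹ * g * tconj rep (g⁻¹ x g)` centralizes the
representative of the class of `x`. -/
lemma key_mem (rep : ConjClasses G → G) (hrep : ∀ c, ConjClasses.mk (rep c) = c)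
    (g x : G) :
    (tconj rep x)⁻¹ * g * tconj rep (g⁻¹ * x * g)
      ∈ Subgroup.centralizer {rep (ConjClasses.mk x)} := by
  have hx := tconj_spec rep hrep x
  have hy := tconj_spec' rep hrep g x
  rw [Subgroup.mem_centralizer_singleton_iff]
  set u := rep (ConjClasses.mk x)
  set s := tconj rep x
  set s' := tconj rep (g⁻¹ * x * g)
  have h1 : (s⁻¹ * g * s') * u * (s⁻¹ * g * s')⁻¹ = u := by
    calc (s⁻¹*g*s') * u * (s⁻¹*g*s')⁻¹ = s⁻¹ * (g * (s' * u * s'⁻¹) * g⁻¹) * s := by group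
    _ = s⁻¹ * (g * (g⁻¹ * x * g) * g⁻¹) * s := by rw [hy]
    _ = u := by rw [← hx]; group
  calc (s⁻¹*g*s')*u = ((s⁻¹*g*s')*u*(s⁻¹*g*s')⁻¹)*(s⁻¹*g*s') := by group
  _ = u * (s⁻¹*g*s') := by rw [h1]

/-- The cocycle associated to a linear map `d` on the group ring:
`Wc d g x = (d g)_{x g}`. -/
noncomputable def Wc (d : MonoidAlgebra A G →ₗ[A] MonoidAlgebra A G) (g x : G) : A :=
  (d (single g 1)).coeff (x * g)

lemma W_cocycle (d : MonoidAlgebra A G →ₗ[A] MonoidAlgebra A G)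
    (hd : ∀ x y, d (x * y) = d x * y + x * d y) (g h x : G) :
    Wc d (g * h) x = Wc d g x + Wc d h (g⁻¹ * x * g) := by
  unfold Wc
  have e : (single (g * h) (1:A) : MonoidAlgebra A G) = single g 1 * single h 1 := by
    rw [single_mul_single, one_mul]
  rw [e, hd]
  rw [MonoidAlgebra.coeff_add, Finsupp.add_apply]
  rw [MonoidAlgebra.mul_single_apply, MonoidAlgebra.single_mul_apply, one_mul, mul_one]
  congr 2 <;> group

lemma W_one (d : MonoidAlgebra A G →ₗ[A] MonoidAlgebra A G)
    (hd : ∀ x y, d (x * y) = d x * y + x * d y) (x : G) : Wc d 1 x = 0 := by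
  have := W_cocycle d hd 1 1 x
  simp only [one_mul, inv_one, mul_one] at this
  exact (left_eq_add.mp this)

lemma W_inv (d : MonoidAlgebra A G →ₗ[A] MonoidAlgebra A G)
    (hd : ∀ x y, d (x * y) = d x * y + x * d y) (s x : G) :
    Wc d s⁻¹ (s⁻¹ * x * s) = - Wc d s x := by
  have := W_cocycle d hd s s⁻¹ x
  rw [mul_inv_cancel, W_one d hd] at this
  exact eq_neg_of_add_eq_zero_left ((add_comm _ _).trans this.symm)

/-- The main identity: a cocycle that vanishes on centralizers of representatives is
the coboundary of `x ↦ Wc d (tconj rep x) x`. -/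
lemma W_coboundary (rep : ConjClasses G → G) (hrep : ∀ c, ConjClasses.mk (rep c) = c)
    (d : MonoidAlgebra A G →ₗ[A] MonoidAlgebra A G)
    (hd : ∀ x y, d (x * y) = d x * y + x * d y)
    (hvan : ∀ (x : G) (z : G), z ∈ Subgroup.centralizer {rep (ConjClasses.mk x)} →
        Wc d z (rep (ConjClasses.mk x)) = 0)
    (g x : G) :
    Wc d g x = Wc d (tconj rep x) x
      - Wc d (tconj rep (g⁻¹ * x * g)) (g⁻¹ * x * g) := by
  have hx := tconj_spec rep hrep x
  have hy := tconj_spec' rep hrep g x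
  set u := rep (ConjClasses.mk x) with hu
  set s := tconj rep x
  set s' := tconj rep (g⁻¹ * x * g)
  set y := g⁻¹ * x * g with hydef
  have hg : g = s * (((s⁻¹ * g * s') * s'⁻¹)) := by group
  have e1 : Wc d g x = Wc d s x + Wc d ((s⁻¹ * g * s') * s'⁻¹) (s⁻¹ * x * s) := by
    rw [← W_cocycle d hd, ← hg]
  have hsxs : s⁻¹ * x * s = u := by rw [← hx]; group
  have hmem := key_mem rep hrep g x
  have hcen : (s⁻¹ * g * s') * u = u * (s⁻¹ * g * s') :=
    (Subgroup.mem_centralizer_singleton_iff.mp hmem)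
  have e2 : Wc d ((s⁻¹ * g * s') * s'⁻¹) u
      = Wc d (s⁻¹ * g * s') u + Wc d s'⁻¹ ((s⁻¹ * g * s')⁻¹ * u * (s⁻¹ * g * s')) :=
    W_cocycle d hd _ _ _
  have hconj : (s⁻¹ * g * s')⁻¹ * u * (s⁻¹ * g * s') = u := by
    rw [mul_assoc, ← hcen]; group
  have e3 : Wc d s'⁻¹ u = - Wc d s' y := by
    have := W_inv d hd s' y
    rwa [show s'⁻¹ * y * s' = u by rw [← hy]; group] at this
  rw [e1, hsxs, e2, hconj, e3, hvan x _ hmem]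
  ring

/-- Leibniz on basis elements implies Leibniz everywhere. -/
lemma deriv_of_single (d : MonoidAlgebra A G →ₗ[A] MonoidAlgebra A G)
    (H : ∀ g h : G, d (single g (1:A) * single h 1)
        = d (single g 1) * single h 1 + single g 1 * d (single h 1)) :
    ∀ v w : MonoidAlgebra A G, d (v * w) = d v * w + v * d w := by
  intro v w
  induction v using MonoidAlgebra.induction_on with
  | of g =>
      induction w using MonoidAlgebra.induction_on with
      | of h => exact H g h
      | add f₁ f₂ h1 h2 => simp only [mul_add, map_add, h1, h2]; abel
      | smul r f hf => simp only [mul_smul_comm, map_smul, hf, smul_add]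
  | add f₁ f₂ h1 h2 => simp only [add_mul, map_add, h1, h2]; abel
  | smul r f hf => simp only [smul_mul_assoc, map_smul, hf, smul_add]

/-- Cocycle of an inner derivation is a coboundary. -/
lemma inner_W (a : MonoidAlgebra A G) (d : MonoidAlgebra A G →ₗ[A] MonoidAlgebra A G)
    (ha : ∀ v, d v = a * v - v * a) (g x : G) :
    Wc d g x = a.coeff (x) - a.coeff (g⁻¹ * x * g) := by
  unfold Wc
  rw [ha, MonoidAlgebra.coeff_sub, Finsupp.sub_apply, MonoidAlgebra.mul_single_apply,
    MonoidAlgebra.single_mul_apply, mul_one, one_mul, mul_inv_cancel_right, mul_assoc]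

/-- Conversely, a coboundary cocycle gives an inner derivation. -/
lemma inner_of_coboundary (d : MonoidAlgebra A G →ₗ[A] MonoidAlgebra A G)
    (a : MonoidAlgebra A G)
    (h : ∀ g : G, d (single g 1) = a * single g 1 - single g 1 * a) :
    ∀ v, d v = a * v - v * a := by
  intro v
  induction v using MonoidAlgebra.induction_on with
  | of g => exact h g
  | add f₁ f₂ h1 h2 =>
      rw [map_add, h1, h2, mul_add, add_mul]
      abel
  | smul r f hf =>
      rw [map_smul, hf, smul_sub, mul_smul_comm, smul_mul_assoc]

/-- The component of the comparison map at a conjugacy class. -/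
noncomputable def phiFun (rep : ConjClasses G → G) (d : derSub A G) (c : ConjClasses G) :
    Additive (Subgroup.centralizer ({rep c} : Set G) : Subgroup G) →+ A where
  toFun z := Wc (d : MonoidAlgebra A G →ₗ[A] MonoidAlgebra A G)
    ((Additive.toMul z : Subgroup.centralizer ({rep c} : Set G)) : G) (rep c)
  map_zero' := by
    simpa using W_one (d : MonoidAlgebra A G →ₗ[A] MonoidAlgebra A G) d.2 (rep c)
  map_add' z w := by
    have hz : ((Additive.toMul z : Subgroup.centralizer ({rep c} : Set G)) : G) * rep c
        = rep c * ((Additive.toMul z : Subgroup.centralizer ({rep c} : Set G)) : G) :=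
      Subgroup.mem_centralizer_singleton_iff.mp (Additive.toMul z).2
    have e : ((Additive.toMul (z + w) : Subgroup.centralizer ({rep c} : Set G)) : G)
        = ((Additive.toMul z : Subgroup.centralizer ({rep c} : Set G)) : G)
          * ((Additive.toMul w : Subgroup.centralizer ({rep c} : Set G)) : G) := rfl
    show Wc (d : MonoidAlgebra A G →ₗ[A] MonoidAlgebra A G)
        ((Additive.toMul (z + w) : Subgroup.centralizer ({rep c} : Set G)) : G) (rep c) = _
    rw [e, W_cocycle _ d.2]
    congr 2
    rw [mul_assoc, ← hz, inv_mul_cancel_left]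

/-- The comparison map from derivations to the product of character groups. -/
noncomputable def Phi (rep : ConjClasses G → G) :
    derSub A G →ₗ[A]
      ((c : ConjClasses G) → (Additive (Subgroup.centralizer ({rep c} : Set G)) →+ A)) where
  toFun d := phiFun rep d
  map_add' d e := by
    funext c
    ext z
    simp only [phiFun, Wc, AddMonoidHom.add_apply, AddMonoidHom.coe_mk, ZeroHom.coe_mk,
      Submodule.coe_add, LinearMap.add_apply, Pi.add_apply]
    rfl
  map_smul' r d := by
    funext c
    ext z
    simp only [phiFun, Wc, AddMonoidHom.coe_mk, ZeroHom.coe_mk, Submodule.coe_smul,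
      LinearMap.smul_apply, RingHom.id_apply, Pi.smul_apply, AddMonoidHom.smul_apply]
    rfl

lemma Phi_apply (rep : ConjClasses G → G) (d : derSub A G) (c : ConjClasses G)
    (z : Additive (Subgroup.centralizer ({rep c} : Set G))) :
    Phi rep d c z = Wc (d : MonoidAlgebra A G →ₗ[A] MonoidAlgebra A G)
      ((Additive.toMul z : Subgroup.centralizer ({rep c} : Set G)) : G) (rep c) := rfl


section Surj

variable (rep : ConjClasses G → G)
variable (f : (c : ConjClasses G) → (Additive (Subgroup.centralizer ({rep c} : Set G)) →+ A))

/-- Extension of the given family of additive characters by zero. -/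
noncomputable def psiFun (c : ConjClasses G) (z : G) : A :=
  letI := Classical.propDecidable
  if hz : z ∈ Subgroup.centralizer ({rep c} : Set G) then
    f c (Additive.ofMul (⟨z, hz⟩ : Subgroup.centralizer ({rep c} : Set G))) else 0

lemma psiFun_mul (c : ConjClasses G) {z w : G}
    (hz : z ∈ Subgroup.centralizer ({rep c} : Set G))
    (hw : w ∈ Subgroup.centralizer ({rep c} : Set G)) :
    psiFun rep f c (z * w) = psiFun rep f c z + psiFun rep f c w := by
  unfold psiFun
  classical
  rw [dif_pos (mul_mem hz hw), dif_pos hz, dif_pos hw, ← map_add]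
  rfl

lemma psiFun_mem (c : ConjClasses G) {z : G}
    (hz : z ∈ Subgroup.centralizer ({rep c} : Set G)) :
    psiFun rep f c z = f c (Additive.ofMul (⟨z, hz⟩ : Subgroup.centralizer ({rep c} : Set G))) := by
  unfold psiFun
  classical
  rw [dif_pos hz]

/-- The cocycle built from a family of characters. -/
noncomputable def WW (g x : G) : A :=
  psiFun rep f (ConjClasses.mk x) ((tconj rep x)⁻¹ * g * tconj rep (g⁻¹ * x * g))

lemma WW_cocycle (hrep : ∀ c, ConjClasses.mk (rep c) = c) (g h x : G) :
    WW rep f (g * h) x = WW rep f g x + WW rep f h (g⁻¹ * x * g) := by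
  unfold WW
  rw [conj_mk g x]
  have e : h⁻¹ * (g⁻¹ * x * g) * h = (g * h)⁻¹ * x * (g * h) := by group
  rw [e]
  have m1 := key_mem rep hrep g x
  have m2 := key_mem rep hrep h (g⁻¹ * x * g)
  rw [conj_mk g x, e] at m2
  rw [← psiFun_mul rep f _ m1 m2]
  congr 1
  group

/-- The derivation built from a family of characters. -/
noncomputable def dd [Finite G] : MonoidAlgebra A G →ₗ[A] MonoidAlgebra A G :=
  Finsupp.lsum A (fun g => LinearMap.toSpanSingleton A (MonoidAlgebra A G)
    (MonoidAlgebra.ofCoeff (Finsupp.equivFunOnFinite.symm (fun p => WW rep f g (p * g⁻¹)))))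
    ∘ₗ (MonoidAlgebra.coeffLinearEquiv A).toLinearMap

lemma dd_single_apply [Finite G] (g p : G) :
    (dd rep f (single g 1)).coeff p = WW rep f g (p * g⁻¹) := by
  unfold dd
  rw [LinearMap.comp_apply, show ((MonoidAlgebra.coeffLinearEquiv A).toLinearMap (single g 1) : G →₀ A) = Finsupp.single g (1:A) from rfl]
  erw [Finsupp.lsum_single, LinearMap.toSpanSingleton_apply, one_smul]
  exact Finsupp.equivFunOnFinite_symm_apply_apply _ p

lemma dd_leibniz [Finite G] (hrep : ∀ c, ConjClasses.mk (rep c) = c) :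
    ∀ v w : MonoidAlgebra A G, dd rep f (v * w) = dd rep f v * w + v * dd rep f w := by
  apply deriv_of_single
  intro g h
  rw [single_mul_single, one_mul]
  ext p
  rw [MonoidAlgebra.coeff_add, Finsupp.add_apply, MonoidAlgebra.mul_single_apply, MonoidAlgebra.single_mul_apply,
    mul_one, one_mul, dd_single_apply, dd_single_apply, dd_single_apply]
  have := WW_cocycle rep f hrep g h (p * (g * h)⁻¹)
  rw [this]
  congr 2
  · group
  · group

lemma dd_W [Finite G] (g x : G) :
    Wc (dd rep f) g x = WW rep f g x := by
  unfold Wc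
  rw [dd_single_apply, mul_inv_cancel_right]

end Surj


lemma ker_Phi [Finite G] (rep : ConjClasses G → G)
    (hrep : ∀ c, ConjClasses.mk (rep c) = c) :
    LinearMap.ker (Phi (A := A) rep) = innSub A G := by
  ext d
  simp only [LinearMap.mem_ker]
  constructor
  · intro h0
    have hvan : ∀ (x z : G), z ∈ Subgroup.centralizer {rep (ConjClasses.mk x)} →
        Wc (d : MonoidAlgebra A G →ₗ[A] MonoidAlgebra A G) z (rep (ConjClasses.mk x)) = 0 := by
      intro x z hz
      have h1 : Phi rep d (ConjClasses.mk x) (Additive.ofMul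
          (⟨z, hz⟩ : Subgroup.centralizer ({rep (ConjClasses.mk x)} : Set G))) = 0 := by
        rw [h0]; rfl
      rw [Phi_apply] at h1
      exact h1
    refine ⟨MonoidAlgebra.ofCoeff (Finsupp.equivFunOnFinite.symm
      (fun x => Wc (d : MonoidAlgebra A G →ₗ[A] MonoidAlgebra A G) (tconj rep x) x)), ?_⟩
    apply inner_of_coboundary
    intro g
    ext p
    rw [MonoidAlgebra.coeff_sub, Finsupp.sub_apply, MonoidAlgebra.mul_single_apply, MonoidAlgebra.single_mul_apply,
      mul_one, one_mul]
    simp only [MonoidAlgebra.coeff_ofCoeff]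
    rw [Finsupp.equivFunOnFinite_symm_apply_apply, Finsupp.equivFunOnFinite_symm_apply_apply]
    have key := W_coboundary rep hrep
      (d : MonoidAlgebra A G →ₗ[A] MonoidAlgebra A G) d.2 hvan g (p * g⁻¹)
    have e1 : g⁻¹ * (p * g⁻¹) * g = g⁻¹ * p := by group
    rw [e1] at key
    have e0 : ((d : MonoidAlgebra A G →ₗ[A] MonoidAlgebra A G) (single g (1:A))).coeff p
        = Wc (d : MonoidAlgebra A G →ₗ[A] MonoidAlgebra A G) g (p * g⁻¹) := by
      unfold Wc; rw [inv_mul_cancel_right]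
    rw [e0, key]
  · rintro ⟨a, hainner⟩
    funext c
    refine AddMonoidHom.ext fun z => ?_
    rw [Phi_apply, inner_W a _ hainner]
    have hz := Subgroup.mem_centralizer_singleton_iff.mp (Additive.toMul z).2
    have e1 : ((Additive.toMul z : Subgroup.centralizer ({rep c} : Set G)) : G)⁻¹ * rep c
        * ((Additive.toMul z : Subgroup.centralizer ({rep c} : Set G)) : G) = rep c := by
      rw [mul_assoc, ← hz, inv_mul_cancel_left]
    rw [e1, sub_self]
    rfl

lemma Phi_surj [Finite G] (rep : ConjClasses G → G)
    (hrep : ∀ c, ConjClasses.mk (rep c) = c) :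
    Function.Surjective (Phi (A := A) (G := G) rep) := by
  intro f
  refine ⟨⟨dd rep f, dd_leibniz rep f hrep⟩, ?_⟩
  funext c
  refine AddMonoidHom.ext fun z => ?_
  rw [Phi_apply]
  show Wc (dd rep f) _ _ = _
  rw [dd_W]
  unfold WW
  have hz := Subgroup.mem_centralizer_singleton_iff.mp (Additive.toMul z).2
  have e1 : ((Additive.toMul z : Subgroup.centralizer ({rep c} : Set G)) : G)⁻¹ * rep c
      * ((Additive.toMul z : Subgroup.centralizer ({rep c} : Set G)) : G) = rep c := by
    rw [mul_assoc, ← hz, inv_mul_cancel_left]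
  rw [e1, hrep c, tconj_rep rep hrep c, inv_one, one_mul, mul_one]
  rw [psiFun_mem rep f c (Additive.toMul z).2]
  rfl

end OutProofAux

/-- **Outer derivations of a finite group ring.**
If `G` is a finite group and `A` is a commutative unital ring, then
`Out(A[G]) = Der(A[G])/Inn(A[G]) ≅ ⨁_{[u]} Hom_Ab(Z(u), A)` as `A`-modules,
the sum ranging over the conjugacy classes of `G` with chosen representatives. -/
theorem out_decomposition_of_finite_group
    (A G : Type) [CommRing A] [Group G] [Finite G]
    (rep : ConjClasses G → G) (hrep : ∀ c, ConjClasses.mk (rep c) = c) :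
    Nonempty (((derSub A G) ⧸ (innSub A G)) ≃ₗ[A]
        (DirectSum (ConjClasses G)
          fun c => (Additive (Subgroup.centralizer {rep c} : Subgroup G) →+ A))) := by
  classical
  have hker : innSub A G = LinearMap.ker (OutProofAux.Phi (A := A) rep) :=
    (OutProofAux.ker_Phi rep hrep).symm
  have hsurj := OutProofAux.Phi_surj (A := A) rep hrep
  have hfin : Finite (ConjClasses G) := Finite.of_surjective _ ConjClasses.mk_surjective
  have : Fintype (ConjClasses G) := Fintype.ofFinite _
  exact ⟨(Submodule.quotEquivOfEq _ _ hker).trans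
    ((LinearMap.quotKerEquivOfSurjective _ hsurj).trans
      (DirectSum.linearEquivFunOnFintype A _ _).symm)⟩
end

section
/- Let G be a finite group and A a commutative unital ring whose additive group is torsion-free (i.e. for every nonzero natural number n and a ∈ A, n·a = 0 implies a = 0). Then every derivation of A[G] is inner. -/
open MonoidAlgebra

/-- `d` is a derivation of the group ring `A[G]`: an `A`-linear endomorphism
satisfying the Leibniz rule. -/
def IsGroupRingDerivation {A G : Type} [CommRing A] [Group G]
    (d : MonoidAlgebra A G →ₗ[A] MonoidAlgebra A G) : Prop :=
  ∀ x y : MonoidAlgebra A G, d (x * y) = d x * y + x * d y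

/-- `d` is an inner derivation of `A[G]`: `d x = a*x - x*a` for some `a ∈ A[G]`. -/
def IsInnerDerivation {A G : Type} [CommRing A] [Group G]
    (d : MonoidAlgebra A G →ₗ[A] MonoidAlgebra A G) : Prop :=
  ∃ a : MonoidAlgebra A G, ∀ x : MonoidAlgebra A G, d x = a * x - x * a

/-- `d` is weakly inner: the coefficient of `h` in `d ĝ` vanishes whenever `g` and `h`
commute (the character of `d` is trivial on loops). -/
def IsWeaklyInnerDerivation {A G : Type} [CommRing A] [Group G]
    (d : MonoidAlgebra A G →ₗ[A] MonoidAlgebra A G) : Prop :=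
  ∀ g h : G, g * h = h * g → (d (MonoidAlgebra.of A G g)).coeff h = 0

section Aux
variable {A G : Type} [CommRing A] [Group G]

/-- coefficient function: `del d g u = coefficient of u*g in d ĝ`. -/
noncomputable def del (d : MonoidAlgebra A G →ₗ[A] MonoidAlgebra A G) (g u : G) : A :=
  (d (of A G g)).coeff (u * g)

theorem del_cocycle (d : MonoidAlgebra A G →ₗ[A] MonoidAlgebra A G)
    (hd : ∀ x y : MonoidAlgebra A G, d (x * y) = d x * y + x * d y) (g₁ g₂ u : G) :
    del d (g₁ * g₂) u = del d g₁ u + del d g₂ (g₁⁻¹ * u * g₁) := by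
  have h0 : of A G (g₁ * g₂) = of A G g₁ * of A G g₂ := map_mul _ _ _
  have h := hd (of A G g₁) (of A G g₂)
  rw [← h0] at h
  have h2 := congrArg (fun z : MonoidAlgebra A G => z.coeff (u * g₁ * g₂)) h
  simp only [of_apply] at h2
  rw [show ∀ (p q : MonoidAlgebra A G) (y : G), (p + q).coeff y = p.coeff y + q.coeff y from fun p q y => by rw [MonoidAlgebra.coeff_add, Finsupp.add_apply]] at h2
  rw [MonoidAlgebra.coeff_mul_single_apply, MonoidAlgebra.coeff_single_mul_apply] at h2
  rw [mul_inv_cancel_right, mul_one, one_mul] at h2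
  have e : g₁⁻¹ * (u * g₁ * g₂) = (g₁⁻¹ * u * g₁) * g₂ := by group
  rw [e] at h2
  simpa [del, of_apply, mul_assoc] using h2

theorem del_comm_zero [Finite G]
    (htf : ∀ n : ℕ, n ≠ 0 → ∀ a : A, n • a = 0 → a = 0)
    (d : MonoidAlgebra A G →ₗ[A] MonoidAlgebra A G)
    (hd : ∀ x y : MonoidAlgebra A G, d (x * y) = d x * y + x * d y)
    (g u : G) (hc : u * g = g * u) : del d g u = 0 := by
  cases nonempty_fintype G
  have hgu : g⁻¹ * u * g = u := by
    calc g⁻¹ * u * g = g⁻¹ * (u * g) := by group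
      _ = g⁻¹ * (g * u) := by rw [hc]
      _ = u := by group
  have h1 : (∑ k : G, del d (g * k) u) = ∑ k : G, del d k u :=
    Fintype.sum_equiv (Equiv.mulLeft g) _ _ (fun k => rfl)
  have h2 : (∑ k : G, del d (g * k) u)
      = (Fintype.card G) • del d g u + ∑ k : G, del d k u := by
    calc (∑ k : G, del d (g * k) u) = ∑ k : G, (del d g u + del d k u) := by
          refine Finset.sum_congr rfl fun k _ => ?_
          rw [del_cocycle d hd g k u, hgu]
      _ = _ := by
          rw [Finset.sum_add_distrib, Finset.sum_const, Finset.card_univ]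
  rw [h1] at h2
  have h3 : (Fintype.card G) • del d g u = 0 := by
    have := h2.symm
    rwa [add_eq_right] at this
  exact htf _ Fintype.card_ne_zero _ h3

noncomputable def grep (u : G) : G := (ConjClasses.mk u).out

theorem grep_conj (g u : G) : grep (g⁻¹ * u * g) = grep u := by
  unfold grep
  congr 1
  exact ConjClasses.mk_eq_mk_iff_isConj.2 (isConj_iff.2 ⟨g, by group⟩)

theorem grep_spec (u : G) : ∃ k : G, k⁻¹ * grep u * k = u := by
  have : IsConj (grep u) u := by
    rw [← ConjClasses.mk_eq_mk_iff_isConj]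
    exact (ConjClasses.mk u).out_eq
  rw [isConj_iff] at this
  obtain ⟨c, hc⟩ := this
  refine ⟨c⁻¹, ?_⟩
  simp only [inv_inv]
  exact hc

noncomputable def conjor (u : G) : G := (grep_spec u).choose

theorem conjor_spec (u : G) : (conjor u)⁻¹ * grep u * conjor u = u := (grep_spec u).choose_spec

noncomputable def afun (d : MonoidAlgebra A G →ₗ[A] MonoidAlgebra A G) (u : G) : A :=
  - del d (conjor u) (grep u)

theorem afun_key [Finite G]
    (htf : ∀ n : ℕ, n ≠ 0 → ∀ a : A, n • a = 0 → a = 0)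
    (d : MonoidAlgebra A G →ₗ[A] MonoidAlgebra A G)
    (hd : ∀ x y : MonoidAlgebra A G, d (x * y) = d x * y + x * d y)
    (g u : G) : afun d u - afun d (g⁻¹ * u * g) = del d g u := by
  set r := grep u with hr
  set k := conjor u with hk
  have hk1 : k⁻¹ * r * k = u := conjor_spec u
  set k' := conjor (g⁻¹ * u * g) with hk'
  have hrr : grep (g⁻¹ * u * g) = r := grep_conj g u
  have hk2 : k'⁻¹ * r * k' = g⁻¹ * u * g := by
    have := conjor_spec (g⁻¹ * u * g); rwa [hrr] at this
  set z := k' * (k * g)⁻¹ with hz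
  have hzrz : z⁻¹ * r * z = r := by
    rw [hz]
    have key : (k * g) * k'⁻¹ * r * k' * (k * g)⁻¹ = r := by
      calc (k * g) * k'⁻¹ * r * k' * (k * g)⁻¹
          = (k * g) * (k'⁻¹ * r * k') * (k * g)⁻¹ := by group
        _ = (k * g) * (g⁻¹ * u * g) * (k * g)⁻¹ := by rw [hk2]
        _ = k * u * k⁻¹ := by group
        _ = k * (k⁻¹ * r * k) * k⁻¹ := by rw [hk1]
        _ = r := by group
    calc (k' * (k * g)⁻¹)⁻¹ * r * (k' * (k * g)⁻¹)
        = (k * g) * k'⁻¹ * r * k' * (k * g)⁻¹ := by group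
      _ = r := key
  have hzr : r * z = z * r := by
    calc r * z = z * (z⁻¹ * r * z) := by group
      _ = z * r := by rw [hzrz]
  have hdz : del d z r = 0 := del_comm_zero htf d hd z r hzr
  have hkz : k' = z * (k * g) := by rw [hz]; group
  have hck' : del d k' r = del d k r + del d g u := by
    rw [hkz, del_cocycle d hd z (k * g) r, hzrz, hdz, zero_add,
      del_cocycle d hd k g r, hk1]
  rw [afun, afun, hrr, ← hk', ← hk, ← hr, hck']
  ring

theorem afun_coeff [Finite G]
    (htf : ∀ n : ℕ, n ≠ 0 → ∀ a : A, n • a = 0 → a = 0)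
    (d : MonoidAlgebra A G →ₗ[A] MonoidAlgebra A G)
    (hd : ∀ x y : MonoidAlgebra A G, d (x * y) = d x * y + x * d y)
    (g h : G) : (d (of A G g)).coeff h = afun d (h * g⁻¹) - afun d (g⁻¹ * h) := by
  have h1 : del d g (h * g⁻¹) = (d (of A G g)).coeff h := by
    unfold del; rw [inv_mul_cancel_right]
  have h2 : g⁻¹ * (h * g⁻¹) * g = g⁻¹ * h := by group
  rw [← h1, ← afun_key htf d hd g (h * g⁻¹), h2]

end Aux

/-- If the additive group of `A` is torsion-free and `G` is a finite group, then every
derivation of `A[G]` is inner. -/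
theorem all_derivations_inner_of_torsion_free
    (A G : Type) [CommRing A] [Group G] [Finite G]
    (htf : ∀ n : ℕ, n ≠ 0 → ∀ a : A, n • a = 0 → a = 0) :
    ∀ d : MonoidAlgebra A G →ₗ[A] MonoidAlgebra A G,
      IsGroupRingDerivation d → IsInnerDerivation d := by
  intro d hd
  classical
  cases nonempty_fintype G
  refine ⟨MonoidAlgebra.ofCoeff (Finsupp.equivFunOnFinite.symm (afun d)), fun x => ?_⟩
  set a : MonoidAlgebra A G := MonoidAlgebra.ofCoeff (Finsupp.equivFunOnFinite.symm (afun d)) with ha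
  have haf : ∀ h : G, a.coeff h = afun d h := fun h => rfl
  induction x using MonoidAlgebra.induction_on with
  | of g =>
    ext h
    rw [MonoidAlgebra.coeff_sub, Finsupp.sub_apply, of_apply, MonoidAlgebra.coeff_mul_single_apply,
      MonoidAlgebra.coeff_single_mul_apply, mul_one, one_mul, haf, haf]
    exact afun_coeff htf d hd g h
  | add f g hf hg => rw [map_add, hf, hg, mul_add, add_mul]; abel
  | smul r f hf => rw [map_smul, hf, smul_sub, mul_smul_comm, smul_mul_assoc]
end

section
/- Let G be a finitely generated group all of whose conjugacy classes are finite (an FC-group) and let A be a commutative unital ring. If d is a weakly inner derivation of A[G], i.e. (d ĝ)(h) = 0 for all g, h ∈ G with gh = hg, then d is inner. -/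
open MonoidAlgebra

section Aux
variable {A G : Type} [CommRing A] [Group G]

/-- The 1-cocycle associated to a derivation: `coc d g = d ĝ · ĝ⁻¹`. -/
noncomputable def coc (d : MonoidAlgebra A G →ₗ[A] MonoidAlgebra A G) (g : G) :
    MonoidAlgebra A G :=
  d (MonoidAlgebra.of A G g) * MonoidAlgebra.of A G g⁻¹

lemma of_mul_of_inv (g : G) :
    (MonoidAlgebra.of A G g) * (MonoidAlgebra.of A G g⁻¹) = 1 := by
  rw [← map_mul, mul_inv_cancel, map_one]

lemma of_inv_mul_of (g : G) :
    (MonoidAlgebra.of A G g⁻¹) * (MonoidAlgebra.of A G g) = 1 := by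
  rw [← map_mul, inv_mul_cancel, map_one]

lemma coc_mul_of (d : MonoidAlgebra A G →ₗ[A] MonoidAlgebra A G) (g : G) :
    coc d g * MonoidAlgebra.of A G g = d (MonoidAlgebra.of A G g) := by
  rw [coc, mul_assoc, of_inv_mul_of, mul_one]

lemma conj_apply (g : G) (p : MonoidAlgebra A G) (y : G) :
    ((MonoidAlgebra.of A G g) * p * (MonoidAlgebra.of A G g⁻¹)).coeff y
      = p.coeff (g⁻¹ * y * g) := by
  simp only [MonoidAlgebra.of_apply, MonoidAlgebra.coeff_mul_single_apply,
    MonoidAlgebra.coeff_single_mul_apply, one_mul, mul_one, inv_inv, mul_assoc]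

variable {d : MonoidAlgebra A G →ₗ[A] MonoidAlgebra A G}

lemma d_one (hd : IsGroupRingDerivation d) : d 1 = 0 := by
  have h : d 1 = d 1 + d 1 := by simpa using hd 1 1
  nth_rewrite 1 [← add_zero (d 1)] at h
  exact (add_left_cancel h).symm

lemma coc_one (hd : IsGroupRingDerivation d) : coc d (1 : G) = 0 := by
  rw [coc]
  have : MonoidAlgebra.of A G (1:G) = 1 := map_one _
  rw [inv_one, this, d_one hd, zero_mul]

lemma coc_mul (hd : IsGroupRingDerivation d) (g h : G) :
    coc d (g * h) = coc d g +
      MonoidAlgebra.of A G g * coc d h * MonoidAlgebra.of A G g⁻¹ := by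
  simp only [coc, map_mul, hd (MonoidAlgebra.of A G g) (MonoidAlgebra.of A G h),
    mul_inv_rev, add_mul]
  congr 1
  · rw [mul_assoc, ← mul_assoc (MonoidAlgebra.of A G h), of_mul_of_inv, one_mul]
  · rw [mul_assoc, mul_assoc, mul_assoc]

lemma coc_inv (hd : IsGroupRingDerivation d) (g : G) :
    coc d g⁻¹ = -(MonoidAlgebra.of A G g⁻¹ * coc d g * MonoidAlgebra.of A G g) := by
  have h := coc_mul hd g⁻¹ g
  rw [inv_mul_cancel, coc_one hd, inv_inv] at h
  rw [eq_comm, add_comm, ← neg_eq_iff_add_eq_zero] at h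
  exact h.symm

lemma coc_apply_of_commute (hwi : IsWeaklyInnerDerivation d) {u x : G}
    (hux : u * x = x * u) : (coc d u).coeff x = 0 := by
  rw [coc]
  show (d (MonoidAlgebra.of A G u) * MonoidAlgebra.single u⁻¹ (1:A)).coeff x = 0
  rw [MonoidAlgebra.coeff_mul_single_apply, inv_inv, mul_one]
  exact hwi u (x * u) (by rw [← mul_assoc, hux])

noncomputable def clRep {G : Type} [Group G] (y : G) : G :=
  Quotient.out (Quotient.mk (IsConj.setoid G) y)

lemma clRep_isConj {G : Type} [Group G] (y : G) : IsConj (clRep y) y := by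
  have h := Quotient.mk_out (s := IsConj.setoid G) y
  exact h

lemma clRep_conj {G : Type} [Group G] (g y : G) : clRep (g⁻¹ * y * g) = clRep y := by
  unfold clRep
  congr 1
  exact Quotient.sound (isConj_iff.2 ⟨g, by group⟩)

end Aux

/-- For a finitely generated FC-group `G` and a commutative unital ring `A`, every weakly
inner derivation of `A[G]` is inner. -/
theorem weakly_inner_is_inner_of_fc
    (A G : Type) [CommRing A] [Group G]
    (hFG : Group.FG G) (hFC : ∀ g : G, (conjugatesOf g).Finite)
    (d : MonoidAlgebra A G →ₗ[A] MonoidAlgebra A G)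
    (hd : IsGroupRingDerivation d) (hwi : IsWeaklyInnerDerivation d) :
    IsInnerDerivation d := by
  classical
  obtain ⟨S, hS⟩ := hFG.out
  set U : Set G := {y | ∃ s ∈ S, ∃ z, (coc d s).coeff z ≠ 0 ∧ IsConj z y} with hU
  have hUconj : ∀ {y y' : G}, y ∈ U → IsConj y y' → y' ∈ U := by
    rintro y y' ⟨s, hs, z, hz, hconj⟩ h
    exact ⟨s, hs, z, hz, hconj.trans h⟩
  have hUfin : U.Finite := by
    have hsub : U ⊆ ⋃ s ∈ (S : Finset G), ⋃ z ∈ (coc d s).coeff.support, conjugatesOf z := by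
      rintro y ⟨s, hs, z, hz, hconj⟩
      simp only [Set.mem_iUnion]
      exact ⟨s, hs, z, Finsupp.mem_support_iff.2 hz, hconj⟩
    exact Set.Finite.subset
      (Set.Finite.biUnion (S.finite_toSet)
        (fun s _ => Set.Finite.biUnion (Set.finite_mem_finset _)
          (fun z _ => hFC z))) hsub
  have hsupp : ∀ g : G, ∀ y : G, (coc d g).coeff y ≠ 0 → y ∈ U := by
    intro g
    have hg : g ∈ Subgroup.closure (S : Set G) := hS ▸ Subgroup.mem_top g
    refine Subgroup.closure_induction (p := fun g _ => ∀ y : G, (coc d g).coeff y ≠ 0 → y ∈ U)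
      ?_ ?_ ?_ ?_ hg
    · intro x hx y hy
      exact ⟨x, hx, y, hy, IsConj.refl y⟩
    · intro y hy
      rw [coc_one hd] at hy
      exact absurd rfl hy
    · intro x z _ _ px pz y hy
      rw [coc_mul hd, MonoidAlgebra.coeff_add, Finsupp.add_apply] at hy
      rcases (by
        by_contra hcon
        push_neg at hcon
        rw [hcon.1, hcon.2, add_zero] at hy
        exact hy rfl : (coc d x).coeff y ≠ 0 ∨
          ((MonoidAlgebra.of A G x) * coc d z * (MonoidAlgebra.of A G x⁻¹)).coeff y ≠ 0) with
        h | h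
      · exact px y h
      · rw [conj_apply] at h
        exact hUconj (pz _ h) (isConj_iff.2 ⟨x, by group⟩)
    · intro x _ px y hy
      rw [coc_inv hd, MonoidAlgebra.coeff_neg, Finsupp.neg_apply, neg_ne_zero,
        show (MonoidAlgebra.of A G x : MonoidAlgebra A G) = MonoidAlgebra.of A G x⁻¹⁻¹ by
          rw [inv_inv],
        conj_apply, inv_inv] at hy
      exact hUconj (px _ hy) (isConj_iff.2 ⟨x⁻¹, by group⟩)
  set c : G → G := fun y => Classical.choose (isConj_iff.mp (clRep_isConj y)) with hcdef
  have hc : ∀ y : G, c y * clRep y * (c y)⁻¹ = y :=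
    fun y => Classical.choose_spec (isConj_iff.mp (clRep_isConj y))
  set a : MonoidAlgebra A G :=
    ∑ y ∈ hUfin.toFinset, MonoidAlgebra.single y ((coc d (c y)).coeff y) with hadef
  have ha : ∀ y : G, a.coeff y = (coc d (c y)).coeff y := by
    intro y
    rw [hadef, MonoidAlgebra.coeff_sum, Finset.sum_apply']
    have heq : ∀ y' ∈ hUfin.toFinset,
        (MonoidAlgebra.single y' ((coc d (c y')).coeff y')).coeff y
          = if y' = y then (coc d (c y')).coeff y' else 0 := fun y' _ => Finsupp.single_apply
    rw [Finset.sum_congr rfl heq, Finset.sum_ite_eq' _ y (fun y' => (coc d (c y')).coeff y')]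
    by_cases hy : y ∈ hUfin.toFinset
    · rw [if_pos hy]
    · rw [if_neg hy]
      by_contra hne
      exact hy (hUfin.mem_toFinset.2 (hsupp (c y) y (Ne.symm hne)))
  have hmain : ∀ (g y : G), (coc d g).coeff y = a.coeff y - a.coeff (g⁻¹ * y * g) := by
    intro g y
    set x := clRep y with hx
    set t := c y with htdef
    have ht : t * x * t⁻¹ = y := hc y
    set s := c (g⁻¹ * y * g) with hsdef
    have hs : s * x * s⁻¹ = g⁻¹ * y * g := by
      have h := hc (g⁻¹ * y * g)
      rwa [clRep_conj, ← hx] at h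
    set u : G := s⁻¹ * (g⁻¹ * t) with hudef
    have htu : t = g * (s * u) := by rw [hudef]; group
    have hux : u * x = x * u := by
      have h1 : t * x = y * t := by
        conv_rhs => rw [← ht]
        group
      have h2 : (g⁻¹ * y * g) * s = s * x := by
        conv_lhs => rw [← hs]
        group
      have h3 : u * x = s⁻¹ * g⁻¹ * (t * x) := by rw [hudef]; group
      rw [h1] at h3
      calc u * x = s⁻¹ * g⁻¹ * (y * t) := h3
        _ = s⁻¹ * ((g⁻¹ * y * g) * s * (s⁻¹ * (g⁻¹ * t))) := by group
        _ = s⁻¹ * (s * x * u) := by rw [h2, hudef]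
        _ = x * u := by group
    have hcu : (coc d u).coeff x = 0 := coc_apply_of_commute hwi hux
    have e1 : (coc d t).coeff y = (coc d g).coeff y + (coc d s).coeff (g⁻¹ * y * g)
        + (coc d u).coeff (s⁻¹ * (g⁻¹ * y * g) * s) := by
      rw [htu, coc_mul hd, coc_mul hd, MonoidAlgebra.coeff_add, Finsupp.add_apply, mul_add, add_mul,
        MonoidAlgebra.coeff_add, Finsupp.add_apply, conj_apply, conj_apply, ← mul_assoc, ← mul_assoc, conj_apply,
        show s⁻¹ * (g⁻¹ * y * g) * s = s⁻¹ * g⁻¹ * y * g * s from by group]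
      ring
    have hsx : s⁻¹ * (g⁻¹ * y * g) * s = x := by
      conv_lhs => rw [← hs]
      group
    rw [hsx, hcu, add_zero] at e1
    rw [ha y, ha (g⁻¹ * y * g), ← htdef, ← hsdef, e1]
    ring
  -- conclude: d x = a x - x a
  refine ⟨a, ?_⟩
  have hofg : ∀ g : G, d (MonoidAlgebra.of A G g)
      = a * MonoidAlgebra.of A G g - MonoidAlgebra.of A G g * a := by
    intro g
    have h1 : coc d g = a - MonoidAlgebra.of A G g * a * MonoidAlgebra.of A G g⁻¹ := by
      ext y
      rw [MonoidAlgebra.coeff_sub, Finsupp.sub_apply, conj_apply]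
      exact hmain g y
    rw [← coc_mul_of d g, h1, sub_mul, mul_assoc (MonoidAlgebra.of A G g * a),
      of_inv_mul_of, mul_one]
  intro x
  have hx : d = (LinearMap.mulLeft A a - LinearMap.mulRight A a :
      MonoidAlgebra A G →ₗ[A] MonoidAlgebra A G) := by
    refine LinearMap.toAddMonoidHom_injective (MonoidAlgebra.addMonoidHom_ext ?_)
    intro g b
    show d (MonoidAlgebra.single g b) = (LinearMap.mulLeft A a - LinearMap.mulRight A a :
        MonoidAlgebra A G →ₗ[A] MonoidAlgebra A G) (MonoidAlgebra.single g b)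
    have hsingle : (MonoidAlgebra.single g b : MonoidAlgebra A G)
        = b • MonoidAlgebra.of A G g := by
      rw [MonoidAlgebra.of_apply, MonoidAlgebra.smul_single', mul_one]
    rw [hsingle, map_smul, map_smul]
    congr 1
    show d (MonoidAlgebra.of A G g)
      = LinearMap.mulLeft A a (MonoidAlgebra.of A G g)
        - LinearMap.mulRight A a (MonoidAlgebra.of A G g)
    rw [LinearMap.mulLeft_apply, LinearMap.mulRight_apply]
    exact hofg g
  rw [hx]
  simp [LinearMap.mulLeft_apply, LinearMap.mulRight_apply]
end

section
/- Let G be a finite group and A a commutative unital ring. A derivation d of A[G] is inner if and only if (d ĝ)(h) = 0 for all g, h ∈ G with gh = hg (i.e. if and only if d is weakly inner). -/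
open MonoidAlgebra

section Aux

variable {A G : Type} [CommRing A] [Group G]

/-- A representative of the conjugacy class of `t`. -/
noncomputable def grdRep (t : G) : G := (ConjClasses.mk t).out

lemma grdRep_isConj (t : G) : IsConj (grdRep t) t := by
  rw [grdRep, ← ConjClasses.mk_eq_mk_iff_isConj]
  exact Quotient.out_eq (s := IsConj.setoid G) (ConjClasses.mk t)

/-- A chosen conjugator taking `grdRep t` to `t`. -/
noncomputable def grdX (t : G) : G := Classical.choose (isConj_iff.mp (grdRep_isConj t))

lemma grdX_spec (t : G) : grdX t * grdRep t * (grdX t)⁻¹ = t :=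
  Classical.choose_spec (isConj_iff.mp (grdRep_isConj t))

lemma grdRep_conj (g t : G) : grdRep (g⁻¹ * t * g) = grdRep t := by
  unfold grdRep
  congr 1
  exact ConjClasses.mk_eq_mk_iff_isConj.mpr (isConj_iff.mpr ⟨g, by group⟩)

variable (d : MonoidAlgebra A G →ₗ[A] MonoidAlgebra A G)

/-- The conjugation cocycle of the derivation `d`, coefficientwise. -/
noncomputable def grdPsi (g t : G) : A := (d (of A G g)).coeff (t * g)

lemma grdPsi_cocycle (hd : IsGroupRingDerivation d) (g h t : G) :
    grdPsi d (g * h) t = grdPsi d g t + grdPsi d h (g⁻¹ * t * g) := by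
  have h1 : (of A G (g * h)) = of A G g * of A G h := map_mul _ _ _
  have h2 := hd (of A G g) (of A G h)
  unfold grdPsi
  rw [h1, h2]
  rw [MonoidAlgebra.coeff_add, Finsupp.add_apply]
  congr 1
  · rw [show (of A G h : MonoidAlgebra A G) = MonoidAlgebra.single h 1 from rfl,
      MonoidAlgebra.coeff_mul_single_apply, mul_one]
    congr 1
    group
  · rw [show (of A G g : MonoidAlgebra A G) = MonoidAlgebra.single g 1 from rfl,
      MonoidAlgebra.coeff_single_mul_apply, one_mul]
    congr 1
    group

/-- The potential whose coboundary is the cocycle `grdPsi`. -/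
noncomputable def grdA (t : G) : A := grdPsi d (grdX t) t

lemma grdPsi_eq_grdA (hd : IsGroupRingDerivation d) (hw : IsWeaklyInnerDerivation d)
    (t y : G) (hy : y * grdRep t * y⁻¹ = t) : grdPsi d y t = grdA d t := by
  set x := grdX t with hxdef
  have hx : x * grdRep t * x⁻¹ = t := grdX_spec t
  set c := grdRep t
  set z := x⁻¹ * y with hzdef
  have hyz : y = x * z := by rw [hzdef]; group
  have h0 : x * c * x⁻¹ = y * c * y⁻¹ := hx.trans hy.symm
  have hzc : z * c = c * z := by
    have h1 : c * (x⁻¹ * y) = (x⁻¹ * y) * c := by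
      have h2 := congrArg (fun w => x⁻¹ * w * y) h0
      simpa [mul_assoc] using h2
    rw [hzdef, h1]
  have hxtx : x⁻¹ * t * x = c := by rw [← hx]; group
  have hcoc := grdPsi_cocycle d hd x z t
  rw [← hyz, hxtx] at hcoc
  have hz0 : grdPsi d z c = 0 := by
    apply hw
    rw [← mul_assoc, hzc, mul_assoc]
  rw [hcoc, hz0, add_zero]
  rfl

lemma grdPsi_eq_sub (hd : IsGroupRingDerivation d) (hw : IsWeaklyInnerDerivation d)
    (g t : G) : grdPsi d g t = grdA d t - grdA d (g⁻¹ * t * g) := by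
  have hx : grdX t * grdRep t * (grdX t)⁻¹ = t := grdX_spec t
  have h1 : grdPsi d (g⁻¹ * grdX t) (g⁻¹ * t * g) = grdA d (g⁻¹ * t * g) := by
    apply grdPsi_eq_grdA d hd hw
    rw [grdRep_conj]
    calc (g⁻¹ * grdX t) * grdRep t * (g⁻¹ * grdX t)⁻¹
        = g⁻¹ * (grdX t * grdRep t * (grdX t)⁻¹) * g := by group
      _ = g⁻¹ * t * g := by rw [hx]
  have hcoc := grdPsi_cocycle d hd g (g⁻¹ * grdX t) t
  rw [mul_inv_cancel_left, h1] at hcoc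
  have : grdPsi d (grdX t) t = grdA d t := rfl
  rw [this] at hcoc
  rw [hcoc]
  ring

end Aux

/-- For a finite group `G` and a commutative unital ring `A`, a derivation of `A[G]` is
inner if and only if it is weakly inner. -/
theorem inner_iff_weakly_inner_of_finite
    (A G : Type) [CommRing A] [Group G] [Finite G]
    (d : MonoidAlgebra A G →ₗ[A] MonoidAlgebra A G)
    (hd : IsGroupRingDerivation d) :
    IsInnerDerivation d ↔ IsWeaklyInnerDerivation d := by
  rw [IsInnerDerivation]
  constructor
  · rintro ⟨a, ha⟩ g h hgh
    rw [ha]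
    have key : h * g⁻¹ = g⁻¹ * h := by
      have h2 := congrArg (fun w => g⁻¹ * w * g⁻¹) hgh
      simpa [mul_assoc] using h2
    rw [MonoidAlgebra.coeff_sub, Finsupp.sub_apply,
      show (of A G g : MonoidAlgebra A G) = MonoidAlgebra.single g 1 from rfl,
      MonoidAlgebra.coeff_mul_single_apply, MonoidAlgebra.coeff_single_mul_apply, mul_one, one_mul,
      key, sub_self]
  · intro hw
    set a0 : MonoidAlgebra A G := MonoidAlgebra.ofCoeff (Finsupp.equivFunOnFinite.symm (grdA d)) with ha0
    refine ⟨a0, ?_⟩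
    have hsingle : ∀ g : G, d (MonoidAlgebra.single g (1:A)) =
        a0 * MonoidAlgebra.single g 1 - MonoidAlgebra.single g 1 * a0 := by
      intro g
      ext h
      rw [MonoidAlgebra.coeff_sub, Finsupp.sub_apply, MonoidAlgebra.coeff_mul_single_apply,
        MonoidAlgebra.coeff_single_mul_apply,
        mul_one, one_mul]
      have h1 : (d (MonoidAlgebra.single g (1:A))).coeff h = grdPsi d g (h * g⁻¹) := by
        unfold grdPsi
        rw [show (of A G g : MonoidAlgebra A G) = MonoidAlgebra.single g 1 from rfl,
          inv_mul_cancel_right]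
      rw [h1, grdPsi_eq_sub d hd hw]
      have harg : g⁻¹ * (h * g⁻¹) * g = g⁻¹ * h := by group
      rw [harg, ha0]
      simp [Finsupp.equivFunOnFinite, MonoidAlgebra.coeff_ofCoeff]
      rfl
    intro x
    induction x using MonoidAlgebra.induction_linear with
    | zero => simp
    | add f g hf hg =>
      rw [map_add, hf, hg, mul_add, add_mul]
      abel
    | single g b =>
      have hb : (MonoidAlgebra.single g b : MonoidAlgebra A G) =
          b • MonoidAlgebra.single g 1 := by
        rw [MonoidAlgebra.smul_single', mul_one]
      show d (MonoidAlgebra.single g b) = a0 * MonoidAlgebra.single g b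
        - MonoidAlgebra.single g b * a0
      rw [hb, map_smul, hsingle g, smul_sub, smul_mul_assoc, mul_smul_comm]
end

section
/- Let G be a finite group, m a positive integer, and A = ℤ/mℤ. If gcd(ord(g), m) = 1 for every g ∈ G, where ord(g) is the order of g in G, then every derivation of A[G] is inner. -/
open MonoidAlgebra

/-- If `G` is finite, `m > 0`, `A = ℤ/mℤ`, and every element of `G` has order coprime
to `m`, then every derivation of `A[G]` is inner. -/
theorem all_derivations_inner_of_coprime_orders
    (G : Type) [Group G] [Finite G] (m : ℕ) (hm : 0 < m)
    (hord : ∀ g : G, Nat.gcd (orderOf g) m = 1) :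
    ∀ d : MonoidAlgebra (ZMod m) G →ₗ[ZMod m] MonoidAlgebra (ZMod m) G,
      IsGroupRingDerivation d → IsInnerDerivation d := by
  classical
  cases nonempty_fintype G
  intro d hd
  set n : ℕ := Fintype.card G with hn
  -- coprimality of |G| and m
  have hcop : Nat.Coprime n m := by
    by_contra hc
    obtain ⟨p, hp, hpd⟩ := Nat.exists_prime_and_dvd hc
    have hpG : p ∣ n := hpd.trans (Nat.gcd_dvd_left _ _)
    have hpm : p ∣ m := hpd.trans (Nat.gcd_dvd_right _ _)
    haveI : Fact p.Prime := ⟨hp⟩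
    obtain ⟨g, hg⟩ := exists_prime_orderOf_dvd_card p hpG
    have h1 : p ∣ Nat.gcd (orderOf g) m := Nat.dvd_gcd (hg ▸ dvd_rfl) hpm
    rw [hord g] at h1
    exact hp.ne_one (Nat.dvd_one.mp h1)
  set u : ZMod m := ((n : ZMod m))⁻¹ with hudef
  have hu : (n : ZMod m) * u = 1 := ZMod.coe_mul_inv_eq_one n hcop
  set og : G →* MonoidAlgebra (ZMod m) G := MonoidAlgebra.of (ZMod m) G with hog
  have hun : ∀ g : G, og g * og g⁻¹ = 1 := by
    intro g; rw [← map_mul, mul_inv_cancel, map_one]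
  have hun' : ∀ g : G, og g⁻¹ * og g = 1 := by
    intro g; rw [← map_mul, inv_mul_cancel, map_one]
  set f : G → MonoidAlgebra (ZMod m) G := fun g => d (og g) * og g⁻¹ with hf
  have hcoc : ∀ g h : G, f (g * h) = f g + og g * f h * og g⁻¹ := by
    intro g h
    have e1 : og (g * h) = og g * og h := map_mul og g h
    have e2 : og (g * h)⁻¹ = og h⁻¹ * og g⁻¹ := by rw [mul_inv_rev, map_mul]
    calc f (g * h) = (d (og g) * og h + og g * d (og h)) * (og h⁻¹ * og g⁻¹) := by
          rw [hf]; simp only []; rw [e1, e2, hd]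
      _ = d (og g) * (og h * og h⁻¹) * og g⁻¹
            + og g * (d (og h) * og h⁻¹) * og g⁻¹ := by noncomm_ring
      _ = f g + og g * f h * og g⁻¹ := by rw [hun h, mul_one]
  set s : MonoidAlgebra (ZMod m) G := ∑ h : G, f h with hs
  set a : MonoidAlgebra (ZMod m) G := u • s with ha
  have hsum : ∀ g : G, s = n • f g + og g * s * og g⁻¹ := by
    intro g
    have reind : ∑ h : G, f (g * h) = ∑ h : G, f h :=
      Fintype.sum_bijective (fun h => g * h) (Group.mulLeft_bijective g)
        _ _ (fun x => rfl)
    calc s = ∑ h : G, f (g * h) := by rw [hs, reind]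
      _ = ∑ h : G, (f g + og g * f h * og g⁻¹) := by
          exact Finset.sum_congr rfl fun h _ => hcoc g h
      _ = n • f g + og g * s * og g⁻¹ := by
          rw [Finset.sum_add_distrib, Finset.sum_const, Finset.card_univ,
            ← Finset.sum_mul, ← Finset.mul_sum, hs]
  have key : ∀ g : G, d (og g) = a * og g - og g * a := by
    intro g
    have h1 : (n : ZMod m) • f g = s - og g * s * og g⁻¹ := by
      rw [Nat.cast_smul_eq_nsmul, eq_sub_iff_add_eq]
      exact (hsum g).symm
    have h2 : f g = a - og g * a * og g⁻¹ := by
      have := congrArg (fun x => u • x) h1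
      simp only [smul_smul, smul_sub] at this
      rw [mul_comm u, hu, one_smul] at this
      rw [this, ha, mul_smul_comm, smul_mul_assoc]
    have h3 : d (og g) = f g * og g := by
      rw [hf]; simp only []
      rw [mul_assoc, hun' g, mul_one]
    rw [h3, h2, sub_mul, mul_assoc, mul_assoc, hun' g, mul_one]
  refine ⟨a, ?_⟩
  intro x
  induction x using MonoidAlgebra.induction_linear with
  | zero => simp
  | add p q hp hq => rw [map_add, hp, hq]; noncomm_ring
  | single g c =>
      have h4 : MonoidAlgebra.single g c = c • og g := by
        rw [hog]
        simp [MonoidAlgebra.of_apply, MonoidAlgebra.smul_single']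
      calc d (MonoidAlgebra.single g c) = d (c • og g) := congrArg (fun z => d z) h4
        _ = c • d (og g) := map_smul d c _
        _ = c • (a * og g - og g * a) := congrArg (fun z => c • z) (key g)
        _ = a * (c • og g) - (c • og g) * a := by
            simp only [smul_sub, mul_smul_comm, smul_mul_assoc]
        _ = a * MonoidAlgebra.single g c - MonoidAlgebra.single g c * a := by rw [h4]
end

section
/- Let G be a group and A a commutative unital ring. A derivation d of A[G] is weakly inner, i.e. (d v̂)(u) = 0 for all u, v ∈ G with uv = vu, if and only if its character is potential, i.e. there exists a function p : G → A such that (d v̂)(u) = p(uv⁻¹) − p(v⁻¹u) for all u, v ∈ G. -/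
open MonoidAlgebra

/-- A derivation of `A[G]` is weakly inner if and only if its character is potential:
there is `p : G → A` with `(d v̂)(u) = p(uv⁻¹) − p(v⁻¹u)` for all `u, v ∈ G`. -/
theorem weakly_inner_iff_potential
    (A G : Type) [CommRing A] [Group G]
    (d : MonoidAlgebra A G →ₗ[A] MonoidAlgebra A G)
    (hd : IsGroupRingDerivation d) :
    IsWeaklyInnerDerivation d ↔
      ∃ p : G → A, ∀ u v : G,
        (d (MonoidAlgebra.of A G v)).coeff u = p (u * v⁻¹) - p (v⁻¹ * u) := by
  classical
  constructor
  · intro hw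
    set f : G → G → A := fun u v => (d (MonoidAlgebra.of A G v)).coeff u with hf
    -- cocycle identity from Leibniz rule
    have hc : ∀ u g h : G, f u (g * h) = f (u * h⁻¹) g + f (g⁻¹ * u) h := by
      intro u g h
      have h1 : MonoidAlgebra.of A G (g * h)
          = MonoidAlgebra.of A G g * MonoidAlgebra.of A G h := map_mul _ _ _
      have h3 : d (MonoidAlgebra.of A G (g * h))
          = d (MonoidAlgebra.of A G g) * MonoidAlgebra.of A G h
            + MonoidAlgebra.of A G g * d (MonoidAlgebra.of A G h) := by
        rw [h1, hd]
      have h4 : (d (MonoidAlgebra.of A G (g * h))).coeff u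
          = (d (MonoidAlgebra.of A G g) * MonoidAlgebra.of A G h).coeff u
            + (MonoidAlgebra.of A G g * d (MonoidAlgebra.of A G h)).coeff u := by
        rw [h3]; rfl
      simpa [hf, MonoidAlgebra.of_apply, MonoidAlgebra.mul_single_apply,
        MonoidAlgebra.single_mul_apply] using h4
    set F : G → G → A := fun a v => f (a * v) v with hF
    have hFc : ∀ a v w : G, F a (v * w) = F a v + F (v⁻¹ * a * v) w := by
      intro a v w
      have := hc (a * (v * w)) v w
      have e1 : a * (v * w) * w⁻¹ = a * v := by group
      have e2 : v⁻¹ * (a * (v * w)) = v⁻¹ * a * v * w := by group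
      rw [e1, e2] at this
      simpa [hF] using this
    have hFloop : ∀ a v : G, v⁻¹ * a * v = a → F a v = 0 := by
      intro a v hav
      have hva : v * a = a * v := by
        conv_lhs => rw [← hav]
        group
      have hcomm : v * (a * v) = (a * v) * v := by
        rw [← mul_assoc, hva]
      exact hw v (a * v) hcomm
    -- representatives and conjugators
    have hrep : ∀ g : G, ∃ c : G, c⁻¹ * g * c = (ConjClasses.mk g).out := by
      intro g
      have h1 : ConjClasses.mk (ConjClasses.mk g).out = ConjClasses.mk g :=
        Quotient.out_eq _
      have h2 : IsConj (ConjClasses.mk g).out g :=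
        ConjClasses.mk_eq_mk_iff_isConj.mp h1
      obtain ⟨c, hc'⟩ := isConj_iff.mp h2
      refine ⟨c, ?_⟩
      conv_lhs => rw [← hc']
      group
    choose t ht using hrep
    set p : G → A := fun g => F g (t g) with hp
    have key : ∀ a v : G, F a v = p a - p (v⁻¹ * a * v) := by
      intro a v
      set b := v⁻¹ * a * v with hb
      have hclass : ConjClasses.mk a = ConjClasses.mk b := by
        rw [ConjClasses.mk_eq_mk_iff_isConj, isConj_iff]
        exact ⟨v⁻¹, by rw [hb]; group⟩
      have hrab : (t a)⁻¹ * a * t a = (t b)⁻¹ * b * t b := by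
        rw [ht a, ht b, hclass]
      have h1 : F a (v * t b) = F a v + F b (t b) := hFc a v (t b)
      have h2 : F a (t a * ((t a)⁻¹ * v * t b))
          = F a (t a) + F ((t a)⁻¹ * a * t a) ((t a)⁻¹ * v * t b) :=
        hFc a (t a) ((t a)⁻¹ * v * t b)
      have hloop : F ((t a)⁻¹ * a * t a) ((t a)⁻¹ * v * t b) = 0 := by
        apply hFloop
        have e : ((t a)⁻¹ * v * t b)⁻¹ * ((t a)⁻¹ * a * t a) * ((t a)⁻¹ * v * t b)
            = (t b)⁻¹ * b * t b := by rw [hb]; group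
        rw [e, ← hrab]
      have heq : t a * ((t a)⁻¹ * v * t b) = v * t b := by group
      rw [heq, hloop, add_zero] at h2
      rw [h2] at h1
      show F a v = F a (t a) - F b (t b)
      exact eq_sub_of_add_eq h1.symm
    refine ⟨p, fun u v => ?_⟩
    have hk := key (u * v⁻¹) v
    have e1 : u * v⁻¹ * v = u := by group
    have e2 : v⁻¹ * (u * v⁻¹) * v = v⁻¹ * u := by group
    rw [e2] at hk
    have hfu : f u v = p (u * v⁻¹) - p (v⁻¹ * u) := by
      rw [← hk, hF]; simp only [e1]
    simpa [hf] using hfu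
  · rintro ⟨p, hp⟩ g h hgh
    have hcomm : h * g⁻¹ = g⁻¹ * h := by
      have h2 : g⁻¹ * (g * h) * g⁻¹ = g⁻¹ * (h * g) * g⁻¹ := by rw [hgh]
      calc h * g⁻¹ = g⁻¹ * (g * h) * g⁻¹ := by group
        _ = g⁻¹ * (h * g) * g⁻¹ := h2
        _ = g⁻¹ * h := by group
    rw [hp h g, hcomm, sub_self]
end

section
/- Let G be a group, A a commutative unital ring, and u ∈ G an element whose conjugacy class [u] is finite. Let d be a derivation of A[G] that is weakly inner (i.e. (d v̂)(h) = 0 whenever hv = vh) and whose character is supported on the conjugacy class [u], meaning (d v̂)(h) ≠ 0 implies v⁻¹h ∈ [u]. Then d is inner; moreover there exists a ∈ A[G] supported on [u] (i.e. a(x) = 0 for x ∉ [u]) with d(x) = ax − xa for all x ∈ A[G]. -/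
open MonoidAlgebra

/-- A weakly inner derivation whose character is supported on a finite conjugacy class
`[u]` is inner, via an element supported on `[u]`. -/
theorem weakly_inner_supported_on_finite_class_is_inner
    (A G : Type) [CommRing A] [Group G] (u : G)
    (hu : (conjugatesOf u).Finite)
    (d : MonoidAlgebra A G →ₗ[A] MonoidAlgebra A G)
    (hd : IsGroupRingDerivation d) (hwi : IsWeaklyInnerDerivation d)
    (hsupp : ∀ v h : G, (d (MonoidAlgebra.of A G v)).coeff h ≠ 0 → v⁻¹ * h ∈ conjugatesOf u) :
    ∃ a : MonoidAlgebra A G,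
      (∀ x : G, x ∉ conjugatesOf u → a.coeff x = 0) ∧
        ∀ x : MonoidAlgebra A G, d x = a * x - x * a := by
  classical
  set F : G → G → A := fun v h => (d (MonoidAlgebra.of A G v)).coeff h with hFdef
  -- cocycle identity from Leibniz rule
  have hcoc : ∀ g h x : G, F (g * h) x = F g (x * h⁻¹) + F h (g⁻¹ * x) := by
    intro g h x
    have h1 : (MonoidAlgebra.of A G (g * h))
        = MonoidAlgebra.of A G g * MonoidAlgebra.of A G h := by
      rw [map_mul]
    have h3 : (d (MonoidAlgebra.of A G (g * h))).coeff x
        = (d (MonoidAlgebra.of A G g) * MonoidAlgebra.of A G h).coeff x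
          + (MonoidAlgebra.of A G g * d (MonoidAlgebra.of A G h)).coeff x := by
      rw [h1, hd]; rfl
    simpa [F, MonoidAlgebra.of_apply, MonoidAlgebra.coeff_mul_single_apply,
      MonoidAlgebra.coeff_single_mul_apply] using h3
  set φ : G → G → A := fun t v => F v (v * t) with hφdef
  have hφcoc : ∀ t g h : G, φ t (g * h) = φ (h * t * h⁻¹) g + φ t h := by
    intro t g h
    have e0 : (g * h) * t = g * h * t := by group
    have e1 : g * h * t * h⁻¹ = g * (h * t * h⁻¹) := by group
    have e2 : g⁻¹ * (g * h * t) = h * t := by group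
    have := hcoc g h (g * h * t)
    simp only [φ, e0, this, e1, e2]
  -- weakly inner: φ t v = 0 whenever v commutes with t
  have hzero : ∀ t v : G, v * t = t * v → φ t v = 0 := by
    intro t v hc
    apply hwi
    calc v * (v * t) = v * (t * v) := by rw [hc]
    _ = (v * t) * v := by group
  -- well-definedness of the value on the conjugacy class
  have hindep : ∀ v v' : G, v * u * v⁻¹ = v' * u * v'⁻¹ → φ u v = φ u v' := by
    intro v v' hvv'
    set c : G := v'⁻¹ * v with hc
    have hcu : c * u * c⁻¹ = u := by
      have : c * u * c⁻¹ = v'⁻¹ * (v * u * v⁻¹) * v' := by simp only [hc]; group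
      rw [this, hvv']; group
    have hcomm : c * u = u * c := by
      have := hcu
      calc c * u = (c * u * c⁻¹) * c := by group
      _ = u * c := by rw [hcu]
    have hv : v = v' * c := by simp only [hc]; group
    rw [hv, hφcoc u v' c, hcu, hzero u c hcomm, add_zero]
  -- the coefficient function
  set α : G → A := fun w =>
    if hw : w ∈ conjugatesOf u then φ u (Classical.choose (isConj_iff.mp hw)) else 0
    with hαdef
  have hαspec : ∀ (w : G) (hw : w ∈ conjugatesOf u) (s : G),
      s * u * s⁻¹ = w → α w = φ u s := by
    intro w hw s hs
    simp only [α, dif_pos hw]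
    exact hindep _ _ ((Classical.choose_spec (isConj_iff.mp hw)).trans hs.symm)
  have hα0 : ∀ w : G, w ∉ conjugatesOf u → α w = 0 := by
    intro w hw; simp only [α, dif_neg hw]
  -- conjugacy class closed under conjugation
  have hconj : ∀ t : G, t ∈ conjugatesOf u → ∀ v : G, v * t * v⁻¹ ∈ conjugatesOf u := by
    intro t ht v
    have h1 : IsConj u t := ht
    have h2 : IsConj t (v * t * v⁻¹) := isConj_iff.mpr ⟨v, rfl⟩
    exact h1.trans h2
  -- the key formula
  have hmain : ∀ t : G, t ∈ conjugatesOf u → ∀ v : G,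
      φ t v = α (v * t * v⁻¹) - α t := by
    intro t ht v
    obtain ⟨s, hs⟩ := isConj_iff.mp ht
    have h1 : α t = φ u s := hαspec t ht s hs
    have hvs : (v * s) * u * (v * s)⁻¹ = v * t * v⁻¹ := by
      rw [← hs]; group
    have h2 : α (v * t * v⁻¹) = φ u (v * s) := hαspec _ (hconj t ht v) (v * s) hvs
    rw [h1, h2, hφcoc u v s, hs]
    ring
  -- build a
  have hswitch : ∀ w : G, α w ≠ 0 → w ∈ hu.toFinset := by
    intro w hw
    rw [Set.Finite.mem_toFinset]
    by_contra h
    exact hw (hα0 w h)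
  set a : MonoidAlgebra A G := MonoidAlgebra.ofCoeff (Finsupp.onFinset hu.toFinset α hswitch) with hadef
  have ha : ∀ w : G, a.coeff w = α w := fun w => rfl
  -- key equality on basis elements
  have key : ∀ g : G, d (MonoidAlgebra.of A G g)
      = a * MonoidAlgebra.of A G g - MonoidAlgebra.of A G g * a := by
    intro g
    ext h
    have hr : (a * MonoidAlgebra.of A G g - MonoidAlgebra.of A G g * a).coeff h
        = a.coeff (h * g⁻¹) - a.coeff (g⁻¹ * h) := by
      rw [MonoidAlgebra.of_apply, MonoidAlgebra.coeff_sub, Finsupp.sub_apply, MonoidAlgebra.coeff_mul_single_apply,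
        MonoidAlgebra.coeff_single_mul_apply, mul_one, one_mul]
    rw [hr, ha, ha]
    by_cases ht : g⁻¹ * h ∈ conjugatesOf u
    · have he : g * (g⁻¹ * h) = h := by group
      have he2 : g * (g⁻¹ * h) * g⁻¹ = h * g⁻¹ := by group
      have := hmain (g⁻¹ * h) ht g
      simp only [φ, he, he2] at this
      exact this
    · have h0 : (d (MonoidAlgebra.of A G g)).coeff h = 0 := by
        by_contra hne
        exact ht (hsupp g h hne)
      have hb : h * g⁻¹ ∉ conjugatesOf u := by
        intro hmem
        apply ht
        have := hconj _ hmem g⁻¹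
        have e : g⁻¹ * (h * g⁻¹) * g⁻¹⁻¹ = g⁻¹ * h := by group
        rwa [e] at this
      rw [h0, hα0 _ ht, hα0 _ hb, sub_zero]
  refine ⟨a, fun x hx => by rw [ha, hα0 x hx], ?_⟩
  intro x
  induction x using MonoidAlgebra.induction_linear with
  | zero => simp
  | add f g hf hg => rw [map_add, hf, hg, mul_add, add_mul]; abel
  | single g b =>
      have h1 : (MonoidAlgebra.single g b : MonoidAlgebra A G)
          = b • MonoidAlgebra.of A G g := by
        rw [MonoidAlgebra.of_apply, MonoidAlgebra.smul_single', mul_one]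
      rw [h1, map_smul, key g, smul_sub, mul_smul_comm, smul_mul_assoc]
end
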